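/- arXiv:2510.27290 — 2 statements merged into one kernel-verified Lean document; each statement's English description precedes it below -/
import Mathlib

section
/- Let S = {±a_1,…,±a_n} where 0 < a_1 < … < a_n and gcd(a_1,…,a_n) = 1. If a_n < 2·a_1, then χ(a_1,…,a_n) = 3. -/
/-- The shift action of `ℤ` on `α^ℤ`: `(s · x)(n) = x(n + s)`. -/
def shift {α : Type*} (s : ℤ) (x : ℤ → α) : ℤ → α := fun n => x (n + s)

/-- The free part `F(2^ℤ)` of the shift action on `2^ℤ = (ℤ → Bool)`. -/
def FreePart : Set (ℤ → Bool) := {x | ∀ s : ℤ, s ≠ 0 → shift s x ≠ x}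

/-- `c` is a Borel proper coloring of the Schreier graph `G_S` on `F(2^ℤ)`,
where `S = {±a : a ∈ A}`: `c` is Borel and `c(x) ≠ c(s · x)` for all `x` and `s ∈ S`. -/
def IsBorelColoring (A : Finset ℕ) {k : ℕ}
    (c : {x : ℤ → Bool // x ∈ FreePart} → Fin k) : Prop :=
  Measurable c ∧
    ∀ (x : {x : ℤ → Bool // x ∈ FreePart}) (a : ℕ), a ∈ A →
      ∀ (h : shift (a : ℤ) x.1 ∈ FreePart), c x ≠ c ⟨shift (a : ℤ) x.1, h⟩

/-- The Borel chromatic number `χ(a₁, …, aₙ)` of the Schreier graph `G_S` on `F(2^ℤ)`,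
where `S = {±a : a ∈ A}`: the least `k` admitting a Borel proper `k`-coloring. -/
noncomputable def borelChromatic (A : Finset ℕ) : ℕ :=
  sInf {k : ℕ | ∃ c : {x : ℤ → Bool // x ∈ FreePart} → Fin k, IsBorelColoring A c}

open Topology

namespace BCN

lemma shift_shift {α : Type*} (s t : ℤ) (x : ℤ → α) :
    shift s (shift t x) = shift (t + s) x := by
  funext n; simp [shift, add_assoc, add_comm s t]

@[simp] lemma shift_zero {α : Type*} (x : ℤ → α) : shift 0 x = x := by
  funext n; simp [shift]

lemma continuous_shift (s : ℤ) : Continuous (fun x : ℤ → Bool => shift s x) := by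
  refine continuous_pi fun n => ?_
  exact continuous_apply (n + s)

lemma measurable_shift (s : ℤ) : Measurable (fun x : ℤ → Bool => shift s x) := by
  refine measurable_pi_iff.2 fun n => ?_
  exact measurable_pi_apply (n + s)

/-- The shift as a homeomorphism. -/
def shiftHomeo (s : ℤ) : (ℤ → Bool) ≃ₜ (ℤ → Bool) where
  toFun := shift s
  invFun := shift (-s)
  left_inv := fun x => by rw [shift_shift]; simp
  right_inv := fun x => by rw [shift_shift]; simp
  continuous_toFun := continuous_shift s
  continuous_invFun := continuous_shift (-s)

lemma freePart_shift {x : ℤ → Bool} (hx : x ∈ FreePart) (a : ℤ) :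
    shift a x ∈ FreePart := by
  intro s hs h
  apply hx s hs
  have := congrArg (shift (-a)) h
  rw [shift_shift, shift_shift] at this
  have h2 : a + (s + -a) = s := by ring
  have h3 : a + -a = (0:ℤ) := by ring
  rw [h2, shift_shift, h3, shift_zero] at this
  exact this

lemma measurableSet_freePart : MeasurableSet FreePart := by
  have : FreePart = ⋂ (s : ℤ), ⋂ (_ : s ≠ 0), {x : ℤ → Bool | shift s x ≠ x} := by
    ext x; simp [FreePart]
  rw [this]
  refine MeasurableSet.iInter fun s => MeasurableSet.iInter fun hs => ?_
  have : {x : ℤ → Bool | shift s x ≠ x} = {x : ℤ → Bool | shift s x = x}ᶜ := rfl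
  rw [this]
  refine (MeasurableSet.compl ?_)
  have : {x : ℤ → Bool | shift s x = x} = ⋂ (n : ℤ), {x : ℤ → Bool | x (n + s) = x n} := by
    ext x; constructor
    · intro h; simp only [Set.mem_iInter]; intro n; exact congrFun h n
    · intro h; funext n; exact Set.mem_iInter.1 h n
  rw [this]
  exact MeasurableSet.iInter fun n =>
    measurableSet_eq_fun (measurable_pi_apply _) (measurable_pi_apply _)

/-- A single point of the free part. -/
lemma freePart_nonempty : ∃ x : ℤ → Bool, x ∈ FreePart := by
  refine ⟨fun n => decide (n = 0), fun s hs h => ?_⟩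
  have := congrFun h 0
  simp [shift] at this
  exact hs this

end BCN

namespace BCN

/-! ### Arithmetic layer: the block coloring of an interval of length `L`. -/

def m3 (a1 L : ℕ) : ℕ := L / (3 * a1) + 1
def kD (a1 L : ℕ) : ℕ := 3 * a1 * m3 a1 L - L
def rB (a1 L : ℕ) : ℕ := 3 * m3 a1 L
def bsize (a1 L j : ℕ) : ℕ := if j % 3 = 0 ∧ j < 3 * kD a1 L then a1 - 1 else a1
def csum (a1 L j : ℕ) : ℕ := ∑ i ∈ Finset.range j, bsize a1 L i
def Jb (a1 L p : ℕ) : ℕ := Nat.findGreatest (fun j => csum a1 L j ≤ p) (rB a1 L)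
def Fc (a1 L p : ℕ) : Fin 3 := ⟨Jb a1 L p % 3, Nat.mod_lt _ (by norm_num)⟩

section Arith

variable {a1 L : ℕ} (h1 : 1 ≤ a1) (hL : 9 * a1 * a1 < L)

include h1 in
lemma kD_add : kD a1 L + L = 3 * a1 * m3 a1 L := by
  have h := Nat.div_add_mod L (3 * a1)
  have hmod : L % (3 * a1) < 3 * a1 := Nat.mod_lt _ (by omega)
  unfold kD m3
  set q := L / (3 * a1)
  have : 3 * a1 * (q + 1) = 3 * a1 * q + 3 * a1 := by ring
  omega

include h1 hL in
lemma kD_lt_m3 : kD a1 L < m3 a1 L := by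
  have h := Nat.div_add_mod L (3 * a1)
  have hmod : L % (3 * a1) < 3 * a1 := Nat.mod_lt _ (by omega)
  have hdiv : 3 * a1 ≤ L / (3 * a1) := by
    rw [Nat.le_div_iff_mul_le (by omega)]
    nlinarith
  have hk := kD_add (a1 := a1) (L := L)
  unfold m3 at *
  set q := L / (3 * a1)
  have h2 : 3 * a1 * (q + 1) = 3 * a1 * q + 3 * a1 := by ring
  -- kD = 3*a1 - L % (3*a1) ≤ 3*a1 ≤ q < q + 1
  omega

lemma csum_succ (j : ℕ) : csum a1 L (j + 1) = csum a1 L j + bsize a1 L j :=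
  Finset.sum_range_succ _ _

lemma csum_mono {i j : ℕ} (hij : i ≤ j) : csum a1 L i ≤ csum a1 L j :=
  Finset.sum_le_sum_of_subset (Finset.range_subset_range.2 hij)

include h1 in
lemma bsize_le (j : ℕ) : bsize a1 L j ≤ a1 := by
  unfold bsize; split <;> omega

include h1 in
lemma bsize_ge (j : ℕ) : a1 ≤ bsize a1 L j + 1 := by
  unfold bsize; split <;> omega

lemma bsize_not_defect {j : ℕ} (hj : j % 3 ≠ 0) : bsize a1 L j = a1 := by
  unfold bsize; rw [if_neg]; tauto

include h1 in
lemma bsize_pair (j : ℕ) : 2 * a1 ≤ bsize a1 L j + bsize a1 L (j + 1) + 1 := by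
  rcases eq_or_ne (j % 3) 0 with h | h
  · have : (j + 1) % 3 ≠ 0 := by omega
    rw [bsize_not_defect this]
    have := bsize_ge (L := L) h1 j
    omega
  · rw [bsize_not_defect h]
    have := bsize_ge (L := L) h1 (j + 1)
    omega

include h1 in
lemma csum_3q (q : ℕ) : csum a1 L (3 * q) + min q (kD a1 L) = q * (3 * a1) := by
  induction q with
  | zero => simp [csum]
  | succ q ih =>
    have e3 : 3 * (q + 1) = 3 * q + 1 + 1 + 1 := by omega
    rw [e3, csum_succ, csum_succ, csum_succ]
    have b1 : bsize a1 L (3 * q + 1) = a1 := bsize_not_defect (by omega)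
    have b2 : bsize a1 L (3 * q + 2) = a1 := bsize_not_defect (by omega)
    have e5 : 3 * q + 1 + 1 = 3 * q + 2 := rfl
    have b0 : bsize a1 L (3 * q) = if 3 * q < 3 * kD a1 L then a1 - 1 else a1 := by
      unfold bsize
      rcases Nat.lt_or_ge (3 * q) (3 * kD a1 L) with h | h
      · rw [if_pos ⟨by omega, h⟩, if_pos h]
      · rw [if_neg (by omega), if_neg (by omega)]
    have e4 : (q + 1) * (3 * a1) = q * (3 * a1) + 3 * a1 := by ring
    rw [e5]
    rcases Nat.lt_or_ge (3 * q) (3 * kD a1 L) with h | h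
    · rw [if_pos h] at b0; omega
    · rw [if_neg (by omega)] at b0; omega

end Arith

end BCN

namespace BCN
section Arith2

variable {a1 L : ℕ}

lemma m3_pos : 1 ≤ m3 a1 L := Nat.succ_le_succ (Nat.zero_le _)

lemma csum_total (h1 : 1 ≤ a1) (hL : 9 * a1 * a1 < L) : csum a1 L (rB a1 L) = L := by
  have h2 := csum_3q (L := L) h1 (m3 a1 L)
  have hk := kD_add (L := L) h1
  have hkm := kD_lt_m3 h1 hL
  have e : m3 a1 L * (3 * a1) = 3 * a1 * m3 a1 L := by ring
  unfold rB
  omega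

lemma csum_rm_aux (h1 : 1 ≤ a1) (hL : 9 * a1 * a1 < L) :
    csum a1 L (rB a1 L - 2) + 2 * a1 = L ∧ csum a1 L (rB a1 L - 1) + a1 = L := by
  have hm := m3_pos (a1 := a1) (L := L)
  have hr : rB a1 L = 3 * m3 a1 L := rfl
  have h2 : rB a1 L - 2 + 1 = rB a1 L - 1 := by omega
  have h3 : rB a1 L - 1 + 1 = rB a1 L := by omega
  have c1 := csum_succ (a1 := a1) (L := L) (rB a1 L - 2)
  rw [h2] at c1
  have c2 := csum_succ (a1 := a1) (L := L) (rB a1 L - 1)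
  rw [h3] at c2
  have b1 : bsize a1 L (rB a1 L - 1) = a1 := bsize_not_defect (by omega)
  have b2 : bsize a1 L (rB a1 L - 2) = a1 := bsize_not_defect (by omega)
  have := csum_total h1 hL
  omega

lemma csum_Jb_le (p : ℕ) : csum a1 L (Jb a1 L p) ≤ p := by
  exact Nat.findGreatest_spec (P := fun j => csum a1 L j ≤ p) (m := 0) (Nat.zero_le _)
    (by simp [csum])

lemma Jb_le_rB (p : ℕ) : Jb a1 L p ≤ rB a1 L := Nat.findGreatest_le _

lemma le_Jb {p j : ℕ} (hj : j ≤ rB a1 L) (hc : csum a1 L j ≤ p) : j ≤ Jb a1 L p :=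
  Nat.le_findGreatest hj hc

lemma Jb_lt_of {p j : ℕ} (hc : p < csum a1 L j) : Jb a1 L p < j := by
  by_contra hcon
  push_neg at hcon
  exact absurd (le_trans (csum_mono hcon) (csum_Jb_le p)) (by omega)

lemma Jb_lt_rB (h1 : 1 ≤ a1) (hL : 9 * a1 * a1 < L) {p : ℕ} (hp : p < L) :
    Jb a1 L p < rB a1 L := by
  apply Jb_lt_of; rw [csum_total h1 hL]; exact hp

lemma lt_csum_succ_Jb (h1 : 1 ≤ a1) (hL : 9 * a1 * a1 < L) {p : ℕ} (hp : p < L) :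
    p < csum a1 L (Jb a1 L p + 1) := by
  by_contra hcon
  push_neg at hcon
  have h' := le_Jb (a1 := a1) (L := L) (p := p) (j := Jb a1 L p + 1)
    (by have := Jb_lt_rB h1 hL hp; omega) hcon
  omega

/-- Same-interval step: the block index advances by 1 or 2. -/
lemma lemA {a an : ℕ} (h1 : 1 ≤ a1) (hL : 9 * a1 * a1 < L) (ha : a1 ≤ a) (haan : a ≤ an)
    (h2 : an < 2 * a1) {p : ℕ} (hpa : p + a < L) :
    Jb a1 L (p + a) = Jb a1 L p + 1 ∨ Jb a1 L (p + a) = Jb a1 L p + 2 := by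
  have hp : p < L := by omega
  have hJr : Jb a1 L p < rB a1 L := Jb_lt_rB h1 hL hp
  have hcs : csum a1 L (Jb a1 L p + 1) = csum a1 L (Jb a1 L p) + bsize a1 L (Jb a1 L p) :=
    csum_succ _
  have hb := bsize_le (L := L) h1 (Jb a1 L p)
  have hcJ := csum_Jb_le (a1 := a1) (L := L) p
  have hlow : Jb a1 L p + 1 ≤ Jb a1 L (p + a) := le_Jb (by omega) (by omega)
  have hup : Jb a1 L (p + a) ≤ Jb a1 L p + 2 := by
    rcases Nat.lt_or_ge (rB a1 L) (Jb a1 L p + 3) with hr | hr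
    · have := Jb_le_rB (a1 := a1) (L := L) (p + a); omega
    · have hsucc : p < csum a1 L (Jb a1 L p + 1) := lt_csum_succ_Jb h1 hL hp
      have hc2 : csum a1 L (Jb a1 L p + 2)
          = csum a1 L (Jb a1 L p + 1) + bsize a1 L (Jb a1 L p + 1) := csum_succ _
      have hc3 : csum a1 L (Jb a1 L p + 3)
          = csum a1 L (Jb a1 L p + 2) + bsize a1 L (Jb a1 L p + 2) := csum_succ _
      have hpair : 2 * a1 ≤ bsize a1 L (Jb a1 L p + 1) + bsize a1 L (Jb a1 L p + 2) + 1 :=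
        bsize_pair h1 _
      have hlt : p + a < csum a1 L (Jb a1 L p + 3) := by omega
      have := Jb_lt_of (a1 := a1) (L := L) (p := p + a) hlt
      omega
  omega

lemma lemA' {a an : ℕ} (h1 : 1 ≤ a1) (hL : 9 * a1 * a1 < L) (ha : a1 ≤ a) (haan : a ≤ an)
    (h2 : an < 2 * a1) {p : ℕ} (hpa : p + a < L) : Fc a1 L (p + a) ≠ Fc a1 L p := by
  have := lemA h1 hL ha haan h2 hpa
  simp only [Fc, Ne, Fin.mk.injEq]
  omega

/-- Crossing-the-marker step. -/
lemma lemB {a an L' : ℕ} (h1 : 1 ≤ a1) (hL : 9 * a1 * a1 < L) (hL' : 9 * a1 * a1 < L')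
    (ha : a1 ≤ a) (haan : a ≤ an) (h2 : an < 2 * a1) {p : ℕ} (hp : p < L) (hpa : L ≤ p + a) :
    Fc a1 L' (p + a - L) ≠ Fc a1 L p := by
  have haa : 2 * a1 ≤ 9 * a1 * a1 := by nlinarith
  have hm := m3_pos (a1 := a1) (L := L)
  have hm' := m3_pos (a1 := a1) (L := L')
  have hr : rB a1 L = 3 * m3 a1 L := rfl
  have hr' : rB a1 L' = 3 * m3 a1 L' := rfl
  obtain ⟨hc2, hc1⟩ := csum_rm_aux (a1 := a1) h1 hL
  have hJlow : rB a1 L - 2 ≤ Jb a1 L p := le_Jb (by omega) (by omega)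
  have hJhigh : Jb a1 L p < rB a1 L := Jb_lt_rB h1 hL hp
  have hp'an : p + a - L + 1 ≤ a := by omega
  have hcs1' : csum a1 L' 1 = csum a1 L' 0 + bsize a1 L' 0 := csum_succ 0
  have hcs2' : csum a1 L' 2 = csum a1 L' 1 + bsize a1 L' 1 := csum_succ 1
  have hcs0' : csum a1 L' 0 = 0 := by simp [csum]
  have hb0' := bsize_ge (L := L') h1 0
  have hb0'' := bsize_le (L := L') h1 0
  have hb1' : bsize a1 L' 1 = a1 := bsize_not_defect (by omega)
  have hJ'2 : Jb a1 L' (p + a - L) < 2 := Jb_lt_of (by omega)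
  have hcsJ := csum_Jb_le (a1 := a1) (L := L) p
  rcases (by omega : Jb a1 L p = rB a1 L - 2 ∨ Jb a1 L p = rB a1 L - 1) with hJc | hJc
  · have hps : p < csum a1 L (Jb a1 L p + 1) := lt_csum_succ_Jb h1 hL hp
    rw [hJc] at hps
    have he : rB a1 L - 2 + 1 = rB a1 L - 1 := by omega
    rw [he] at hps
    have hJ'0 : Jb a1 L' (p + a - L) < 1 := Jb_lt_of (by omega)
    simp only [Fc, Ne, Fin.mk.injEq]
    omega
  · simp only [Fc, Ne, Fin.mk.injEq]
    omega

end Arith2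
end BCN


namespace BCN

open Encodable

/-- Index type for basic marker candidate sets. -/
def Idx : Type := Σ K : ℕ, Fin (2 * K + 1) → Bool

attribute [local instance] Fintype.toEncodable

noncomputable instance : Encodable Idx := Sigma.encodable

/-- The pattern on `[-K, K]` determined by `τ`. -/
def pat (K : ℕ) (τ : Fin (2 * K + 1) → Bool) : ℤ → Bool := fun j =>
  if h : -(K : ℤ) ≤ j ∧ j ≤ (K : ℤ) then τ ⟨(j + K).toNat, by omega⟩ else false

def cylPat (K : ℕ) (τ : Fin (2 * K + 1) → Bool) : Set (ℤ → Bool) :=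
  {x | ∀ j : ℤ, -(K : ℤ) ≤ j → j ≤ (K : ℤ) → x j = pat K τ j}

/-- `τ` distinguishes the center from all of its translates by `1 ≤ t ≤ N`. -/
def goodPat (N K : ℕ) (τ : Fin (2 * K + 1) → Bool) : Prop :=
  ∀ t : ℤ, 1 ≤ t → t ≤ (N : ℤ) →
    ∃ j : ℤ, -(K : ℤ) ≤ j ∧ j + t ≤ (K : ℤ) ∧ pat K τ j ≠ pat K τ (j + t)

def Upat (N : ℕ) (i : Idx) : Set (ℤ → Bool) :=
  {x | goodPat N i.1 i.2 ∧ x ∈ cylPat i.1 i.2 ∧ x ∈ FreePart}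

lemma measurable_cylPat (K : ℕ) (τ : Fin (2 * K + 1) → Bool) :
    MeasurableSet (cylPat K τ) := by
  have : cylPat K τ = ⋂ (j : ℤ), {x : ℤ → Bool | -(K : ℤ) ≤ j → j ≤ (K : ℤ) → x j = pat K τ j} := by
    ext x; simp [cylPat, Set.mem_iInter]
  rw [this]
  refine MeasurableSet.iInter fun j => ?_
  by_cases h1 : -(K : ℤ) ≤ j
  · by_cases h2 : j ≤ (K : ℤ)
    · have : {x : ℤ → Bool | -(K : ℤ) ≤ j → j ≤ (K : ℤ) → x j = pat K τ j}
          = {x : ℤ → Bool | x j = pat K τ j} := by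
        ext x; simp [h1, h2]
      rw [this]
      exact measurableSet_eq_fun (measurable_pi_apply j) measurable_const
    · have : {x : ℤ → Bool | -(K : ℤ) ≤ j → j ≤ (K : ℤ) → x j = pat K τ j} = Set.univ := by
        ext x; simp [h2]
      rw [this]; exact MeasurableSet.univ
  · have : {x : ℤ → Bool | -(K : ℤ) ≤ j → j ≤ (K : ℤ) → x j = pat K τ j} = Set.univ := by
      ext x; simp [h1]
    rw [this]; exact MeasurableSet.univ

lemma measurable_Upat (N : ℕ) (i : Idx) : MeasurableSet (Upat N i) := by
  by_cases h : goodPat N i.1 i.2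
  · have : Upat N i = cylPat i.1 i.2 ∩ FreePart := by
      ext x
      simp only [Upat, Set.mem_setOf_eq, Set.mem_inter_iff, h, true_and]
    rw [this]; exact (measurable_cylPat _ _).inter measurableSet_freePart
  · have : Upat N i = ∅ := by
      ext x
      simp only [Upat, Set.mem_setOf_eq, h, false_and, Set.mem_empty_iff_false]
    rw [this]; exact MeasurableSet.empty

/-- Discreteness of each `Upat`. -/
lemma Upat_discrete {N : ℕ} {i : Idx} {x : ℤ → Bool} {t : ℤ} (h1 : 1 ≤ t) (h2 : t ≤ (N : ℤ))
    (hx : x ∈ Upat N i) (hy : shift t x ∈ Upat N i) : False := by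
  obtain ⟨hg, hcyl, -⟩ := hx
  obtain ⟨-, hcyl', -⟩ := hy
  obtain ⟨j, hj1, hj2, hj3⟩ := hg t h1 h2
  have e2 : x (j + t) = pat i.1 i.2 (j + t) := hcyl (j + t) (by omega) hj2
  have e3 : (shift t x) j = pat i.1 i.2 j := hcyl' j hj1 (by omega)
  have e4 : (shift t x) j = x (j + t) := rfl
  exact hj3 ((e4.symm.trans e3).symm.trans ((e4.symm.trans (e4.trans e2))))

lemma pat_eval (K : ℕ) (τ : Fin (2 * K + 1) → Bool) {j : ℤ} (h1 : -(K : ℤ) ≤ j)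
    (h2 : j ≤ (K : ℤ)) (hj : ((j + K).toNat) < 2 * K + 1) :
    pat K τ j = τ ⟨(j + K).toNat, hj⟩ := by
  unfold pat
  rw [dif_pos ⟨h1, h2⟩]

/-- Every free point lies in some `Upat`. -/
lemma Upat_cover {N : ℕ} {x : ℤ → Bool} (hx : x ∈ FreePart) : ∃ i : Idx, x ∈ Upat N i := by
  have hex : ∀ t : ℤ, ∃ j : ℤ, 1 ≤ t → x j ≠ x (j + t) := by
    intro t
    by_cases ht : 1 ≤ t
    · have := hx t (by omega)
      by_contra hcon
      push_neg at hcon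
      exact this (funext fun n => (hcon n).2.symm)
    · exact ⟨0, fun h => absurd h ht⟩
  classical
  choose w hw using hex
  set s : Finset ℤ := Finset.Icc (1 : ℤ) (N : ℤ) with hs
  set K : ℕ := s.sup (fun t => max (w t).natAbs ((w t) + t).natAbs) with hK
  have hKb : ∀ t : ℤ, 1 ≤ t → t ≤ (N : ℤ) → (w t).natAbs ≤ K ∧ ((w t) + t).natAbs ≤ K := by
    intro t h1 h2
    have hts : t ∈ s := by rw [hs]; simp only [Finset.mem_Icc]; omega
    have hle := Finset.le_sup (f := fun t => max (w t).natAbs ((w t) + t).natAbs) hts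
    rw [← hK] at hle
    omega
  have hτ : ∀ j : ℤ, -(K : ℤ) ≤ j → j ≤ (K : ℤ) →
      pat K (fun idx => x ((idx : ℤ) - K)) j = x j := by
    intro j h1 h2
    have h3 : (0 : ℤ) ≤ j + K := by omega
    have h4 : ((j + K).toNat) < 2 * K + 1 := by omega
    rw [pat_eval K _ h1 h2 h4]
    congr 1
    simp only [Fin.val_mk]
    omega
  refine ⟨⟨K, fun idx => x ((idx : ℤ) - K)⟩, ?_, ?_, hx⟩
  · show goodPat N K _
    intro t h1 h2
    obtain ⟨hb1, hb2⟩ := hKb t h1 h2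
    refine ⟨w t, by omega, by omega, ?_⟩
    rw [hτ (w t) (by omega) (by omega), hτ (w t + t) (by omega) (by omega)]
    exact hw t h1
  · show x ∈ cylPat K _
    intro j hj1 hj2
    exact (hτ j hj1 hj2).symm

/-! ### The greedy marker set -/

noncomputable def UU (N n : ℕ) : Set (ℤ → Bool) :=
  match (Encodable.decode (α := Idx) n) with
  | some i => Upat N i
  | none => ∅

def nbhd (N : ℕ) (S : Set (ℤ → Bool)) : Set (ℤ → Bool) :=
  {x | ∃ t : ℤ, t.natAbs ≤ N ∧ shift t x ∈ S}

noncomputable def acc (N : ℕ) : ℕ → Set (ℤ → Bool)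
  | 0 => ∅
  | n + 1 => acc N n ∪ nbhd N (UU N n \ acc N n)

noncomputable def stage (N n : ℕ) : Set (ℤ → Bool) := UU N n \ acc N n

noncomputable def Mk (N : ℕ) : Set (ℤ → Bool) := ⋃ n, stage N n

lemma UU_subset_free (N n : ℕ) : UU N n ⊆ FreePart := by
  unfold UU
  match Encodable.decode (α := Idx) n with
  | some i => exact fun x hx => hx.2.2
  | none => exact Set.empty_subset _

lemma Mk_subset_free (N : ℕ) : Mk N ⊆ FreePart :=
  Set.iUnion_subset fun n x hx => UU_subset_free N n hx.1

lemma acc_mono (N : ℕ) {n m : ℕ} (h : n ≤ m) : acc N n ⊆ acc N m := by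
  induction m with
  | zero => have : n = 0 := by omega
            rw [this]
  | succ m ih =>
    rcases Nat.lt_or_ge n (m + 1) with h' | h'
    · exact (ih (by omega)).trans Set.subset_union_left
    · have : n = m + 1 := by omega
      rw [this]

lemma acc_mem (N : ℕ) {n : ℕ} {x : ℤ → Bool} (hx : x ∈ acc N n) :
    ∃ m < n, x ∈ nbhd N (stage N m) := by
  induction n with
  | zero => exact absurd hx (by simp [acc])
  | succ n ih =>
    rcases hx with h | h
    · obtain ⟨m, hm, hmem⟩ := ih h
      exact ⟨m, by omega, hmem⟩
    · exact ⟨n, by omega, h⟩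

lemma UU_discrete {N n : ℕ} {x : ℤ → Bool} {t : ℤ} (h1 : 1 ≤ t) (h2 : t ≤ (N : ℤ))
    (hx : x ∈ UU N n) (hy : shift t x ∈ UU N n) : False := by
  unfold UU at hx hy
  match hdec : Encodable.decode (α := Idx) n with
  | some i => rw [hdec] at hx hy; exact Upat_discrete h1 h2 hx hy
  | none => rw [hdec] at hx; exact hx

/-- The marker set is `N`-discrete. -/
lemma Mk_discrete {N : ℕ} {x : ℤ → Bool} {t : ℤ} (ht : t ≠ 0) (htN : t.natAbs ≤ N)
    (hx : x ∈ Mk N) (hy : shift t x ∈ Mk N) : False := by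
  obtain ⟨Sn, ⟨n, rfl⟩, hxn⟩ := hx
  obtain ⟨Sm, ⟨m, rfl⟩, hym⟩ := hy
  rcases Nat.lt_trichotomy n m with hnm | hnm | hnm
  · -- shift t x ∈ stage m, but shift t x ∈ nbhd N (stage n) ⊆ acc m
    apply hym.2
    apply acc_mono N hnm
    refine Set.mem_union_right _ ⟨-t, by omega, ?_⟩
    rw [shift_shift]
    simp only [add_neg_cancel, shift_zero]
    exact hxn
  · subst hnm
    rcases Int.lt_or_lt_of_ne ht with h | h
    · -- t < 0 : apply UU_discrete to (shift t x) with -t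
      refine UU_discrete (N := N) (n := n) (t := -t) (by omega) (by omega) hym.1 ?_
      rw [shift_shift]
      have : t + -t = 0 := by ring
      rw [this, shift_zero]
      exact hxn.1
    · exact UU_discrete (N := N) (n := n) (by omega) (by omega) hxn.1 hym.1
  · apply hxn.2
    apply acc_mono N hnm
    refine Set.mem_union_right _ ⟨t, by omega, ?_⟩
    exact hym

/-- Every free point is within `N` of a marker. -/
lemma Mk_attain {N : ℕ} {x : ℤ → Bool} (hx : x ∈ FreePart) :
    ∃ t : ℤ, t.natAbs ≤ N ∧ shift t x ∈ Mk N := by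
  obtain ⟨i, hi⟩ := Upat_cover (N := N) hx
  set n := Encodable.encode i with hn
  have hUU : x ∈ UU N n := by
    unfold UU
    rw [hn, Encodable.encodek]
    exact hi
  by_cases hacc : x ∈ acc N n
  · obtain ⟨m, hm, t, htN, hts⟩ := acc_mem N hacc
    exact ⟨t, htN, Set.mem_iUnion.2 ⟨m, hts⟩⟩
  · exact ⟨0, by simp, Set.mem_iUnion.2 ⟨n, by rw [shift_zero]; exact ⟨hUU, hacc⟩⟩⟩

lemma measurable_UU (N n : ℕ) : MeasurableSet (UU N n) := by
  unfold UU
  match Encodable.decode (α := Idx) n with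
  | some i => exact measurable_Upat N i
  | none => exact MeasurableSet.empty

lemma measurable_nbhd (N : ℕ) {S : Set (ℤ → Bool)} (hS : MeasurableSet S) :
    MeasurableSet (nbhd N S) := by
  have : nbhd N S = ⋃ (t : ℤ), ⋃ (_ : t.natAbs ≤ N), (fun x => shift t x) ⁻¹' S := by
    ext x; simp [nbhd]
  rw [this]
  exact MeasurableSet.iUnion fun t => MeasurableSet.iUnion fun _ => (measurable_shift t) hS

lemma measurable_acc (N n : ℕ) : MeasurableSet (acc N n) := by
  induction n with
  | zero => exact MeasurableSet.empty
  | succ n ih =>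
    exact ih.union (measurable_nbhd N ((measurable_UU N n).diff ih))

lemma measurable_stage (N n : ℕ) : MeasurableSet (stage N n) :=
  (measurable_UU N n).diff (measurable_acc N n)

lemma measurable_Mk (N : ℕ) : MeasurableSet (Mk N) :=
  MeasurableSet.iUnion (measurable_stage N)

end BCN


namespace BCN

open scoped Classical

noncomputable def posN (N : ℕ) (x : ℤ → Bool) : ℕ :=
  if h : ∃ n : ℕ, shift (-(n : ℤ)) x ∈ Mk N then Nat.find h else 0

noncomputable def gapN (N : ℕ) (x : ℤ → Bool) : ℕ :=
  if h : ∃ n : ℕ, shift ((n : ℤ) + 1) x ∈ Mk N then Nat.find h else 0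

noncomputable def lenN (N : ℕ) (x : ℤ → Bool) : ℕ := posN N x + gapN N x + 1

section PosGap

variable {N : ℕ} {x : ℤ → Bool}

lemma ex_pos (hx : x ∈ FreePart) : ∃ n : ℕ, shift (-(n : ℤ)) x ∈ Mk N := by
  obtain ⟨t, htN, ht⟩ := Mk_attain (N := N) (freePart_shift hx (-(N : ℤ)))
  rw [shift_shift] at ht
  refine ⟨(N - t).toNat, ?_⟩
  have he : -(((N - t).toNat : ℤ)) = -(N : ℤ) + t := by omega
  rw [he]
  exact ht

lemma ex_gap (hx : x ∈ FreePart) : ∃ n : ℕ, shift ((n : ℤ) + 1) x ∈ Mk N := by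
  obtain ⟨t, htN, ht⟩ := Mk_attain (N := N) (freePart_shift hx ((N : ℤ) + 1))
  rw [shift_shift] at ht
  refine ⟨(N + t).toNat, ?_⟩
  have he : ((N + t).toNat : ℤ) + 1 = (N : ℤ) + 1 + t := by omega
  rw [he]
  exact ht

lemma posN_marker (hx : x ∈ FreePart) : shift (-(posN N x : ℤ)) x ∈ Mk N := by
  rw [posN, dif_pos (ex_pos hx)]
  exact Nat.find_spec (ex_pos hx)

lemma posN_min (hx : x ∈ FreePart) {q : ℕ} (hq : q < posN N x) :
    shift (-(q : ℤ)) x ∉ Mk N := by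
  rw [posN, dif_pos (ex_pos hx)] at hq
  exact Nat.find_min (ex_pos hx) hq

lemma gapN_marker (hx : x ∈ FreePart) : shift ((gapN N x : ℤ) + 1) x ∈ Mk N := by
  rw [gapN, dif_pos (ex_gap hx)]
  exact Nat.find_spec (ex_gap hx)

lemma gapN_min (hx : x ∈ FreePart) {q : ℕ} (hq : q < gapN N x) :
    shift ((q : ℤ) + 1) x ∉ Mk N := by
  rw [gapN, dif_pos (ex_gap hx)] at hq
  exact Nat.find_min (ex_gap hx) hq

/-- No marker strictly inside the interval. -/
lemma no_marker_inside (hx : x ∈ FreePart) {t : ℤ} (h1 : -(posN N x : ℤ) < t)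
    (h2 : t < (gapN N x : ℤ) + 1) (ht : shift t x ∈ Mk N) : False := by
  rcases Int.lt_or_le 0 t with h | h
  · have hq1 : (t - 1).toNat < gapN N x := by omega
    have hq : ((t - 1).toNat : ℤ) + 1 = t := by omega
    exact gapN_min hx hq1 (by rw [hq]; exact ht)
  · have hq1 : (-t).toNat < posN N x := by omega
    have hq : -(((-t).toNat : ℤ)) = t := by omega
    exact posN_min hx hq1 (by rw [hq]; exact ht)

/-- Discreteness along the orbit. -/
lemma orbit_disc (hx : x ∈ FreePart) {t1 t2 : ℤ} (h1 : shift t1 x ∈ Mk N)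
    (h2 : shift t2 x ∈ Mk N) (hne : t1 ≠ t2) : N < (t1 - t2).natAbs := by
  by_contra hcon
  push_neg at hcon
  refine Mk_discrete (t := t1 - t2) (by omega) (by omega) h2 ?_
  rw [shift_shift]
  have : t2 + (t1 - t2) = t1 := by ring
  rw [this]
  exact h1

lemma lenN_gt (hx : x ∈ FreePart) : N < lenN N x := by
  have h1 := posN_marker (N := N) hx
  have h2 := gapN_marker (N := N) hx
  have := orbit_disc hx h2 h1 (by omega)
  unfold lenN
  omega

/-- Equivariance, case `a ≤ gapN x`. -/
lemma posN_shift_small (hx : x ∈ FreePart) {a : ℕ} (ha : 1 ≤ a) (hag : a ≤ gapN N x) :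
    posN N (shift (a : ℤ) x) = posN N x + a ∧ gapN N (shift (a : ℤ) x) = gapN N x - a := by
  have hy : shift (a : ℤ) x ∈ FreePart := freePart_shift hx a
  constructor
  · have hmark : shift (-(((posN N x + a : ℕ)) : ℤ)) (shift (a : ℤ) x) ∈ Mk N := by
      rw [shift_shift]
      have : (a : ℤ) + -((posN N x + a : ℕ) : ℤ) = -(posN N x : ℤ) := by push_cast; ring
      rw [this]
      exact posN_marker hx
    rw [posN, dif_pos (ex_pos hy)]
    rw [Nat.find_eq_iff]
    refine ⟨hmark, fun q hq hmem => ?_⟩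
    rw [shift_shift] at hmem
    exact no_marker_inside hx (t := (a : ℤ) + -(q : ℤ)) (by omega) (by omega) hmem
  · have hmark : shift (((gapN N x - a : ℕ) : ℤ) + 1) (shift (a : ℤ) x) ∈ Mk N := by
      rw [shift_shift]
      have : (a : ℤ) + (((gapN N x - a : ℕ) : ℤ) + 1) = (gapN N x : ℤ) + 1 := by
        push_cast [Nat.cast_sub hag]; ring
      rw [this]
      exact gapN_marker hx
    rw [gapN, dif_pos (ex_gap hy)]
    rw [Nat.find_eq_iff]
    refine ⟨hmark, fun q hq hmem => ?_⟩
    rw [shift_shift] at hmem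
    have hcast : (a : ℤ) + ((q : ℤ) + 1) = ((a + q : ℕ) : ℤ) + 1 := by push_cast; ring
    rw [hcast] at hmem
    exact gapN_min hx (q := a + q) (by omega) hmem

/-- Equivariance, case `gapN x < a ≤ N`. -/
lemma posN_shift_big (hx : x ∈ FreePart) {a : ℕ} (hag : gapN N x < a) (haN : a ≤ N) :
    posN N (shift (a : ℤ) x) = a - gapN N x - 1 := by
  have hy : shift (a : ℤ) x ∈ FreePart := freePart_shift hx a
  have hmark : shift (-(((a - gapN N x - 1 : ℕ)) : ℤ)) (shift (a : ℤ) x) ∈ Mk N := by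
    rw [shift_shift]
    have : (a : ℤ) + -((a - gapN N x - 1 : ℕ) : ℤ) = (gapN N x : ℤ) + 1 := by omega
    rw [this]
    exact gapN_marker hx
  rw [posN, dif_pos (ex_pos hy)]
  rw [Nat.find_eq_iff]
  refine ⟨hmark, fun q hq hmem => ?_⟩
  rw [shift_shift] at hmem
  -- marker at a - q ∈ (gap + 1, a]; but marker at gap + 1, distance ≤ a - gap - 2 < N
  have hg := gapN_marker (N := N) hx
  have hd := orbit_disc hx hmem hg (by omega)
  omega

end PosGap

end BCN


namespace BCN

noncomputable def colorF (a1 : ℕ) (x : ℤ → Bool) : Fin 3 :=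
  Fc a1 (lenN (9 * a1 * a1) x) (posN (9 * a1 * a1) x)

theorem colorF_proper {a1 an a : ℕ} (h1 : 1 ≤ a1) (h2 : an < 2 * a1) (ha : a1 ≤ a)
    (haan : a ≤ an) {x : ℤ → Bool} (hx : x ∈ FreePart) :
    colorF a1 (shift (a : ℤ) x) ≠ colorF a1 x := by
  set N := 9 * a1 * a1 with hN
  have key : 2 * a1 ≤ 9 * a1 * a1 := by nlinarith
  have haN : a ≤ N := by omega
  have hy : shift (a : ℤ) x ∈ FreePart := freePart_shift hx a
  have hL : 9 * a1 * a1 < lenN N x := lenN_gt hx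
  have hL' : 9 * a1 * a1 < lenN N (shift (a : ℤ) x) := lenN_gt hy
  unfold colorF
  rw [← hN]
  rcases Nat.lt_or_ge (gapN N x) a with hag' | hag
  swap
  · obtain ⟨hp, hg⟩ := posN_shift_small hx (by omega) hag
    have hlen : lenN N (shift (a : ℤ) x) = lenN N x := by
      unfold lenN; rw [hp, hg]; omega
    rw [hlen, hp]
    exact lemA' h1 hL ha haan h2 (by unfold lenN; omega)
  · have hp := posN_shift_big hx hag' haN
    have hp' : posN N (shift (a : ℤ) x) = posN N x + a - lenN N x := by
      rw [hp]; unfold lenN; omega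
    rw [hp']
    exact lemB h1 hL hL' ha haan h2 (by unfold lenN; omega) (by unfold lenN; omega)

lemma measurable_posN (N : ℕ) : Measurable (posN N) := by
  apply measurable_to_countable'
  intro p
  classical
  have hE : MeasurableSet {x : ℤ → Bool | ∃ n : ℕ, shift (-(n : ℤ)) x ∈ Mk N} := by
    have : {x : ℤ → Bool | ∃ n : ℕ, shift (-(n : ℤ)) x ∈ Mk N}
        = ⋃ n : ℕ, (fun x => shift (-(n : ℤ)) x) ⁻¹' Mk N := by
      ext x; simp [Set.mem_iUnion]
    rw [this]
    exact MeasurableSet.iUnion fun n => measurable_shift _ (measurable_Mk N)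
  have : posN N ⁻¹' {p} =
      ({x : ℤ → Bool | ∃ n : ℕ, shift (-(n : ℤ)) x ∈ Mk N} ∩
        ((fun x => shift (-(p : ℤ)) x) ⁻¹' Mk N ∩
          ⋂ q ∈ Finset.range p, ((fun x => shift (-(q : ℤ)) x) ⁻¹' Mk N)ᶜ)) ∪
      ({x : ℤ → Bool | ∃ n : ℕ, shift (-(n : ℤ)) x ∈ Mk N}ᶜ ∩
        (if p = 0 then Set.univ else ∅)) := by
    ext x
    by_cases hex : ∃ n : ℕ, shift (-(n : ℤ)) x ∈ Mk N
    · simp only [Set.mem_preimage, Set.mem_singleton_iff, Set.mem_union, Set.mem_inter_iff,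
        Set.mem_setOf_eq, hex, true_and, Set.mem_compl_iff, not_true, false_and, or_false,
        Set.mem_iInter, Finset.mem_range]
      rw [posN, dif_pos hex, Nat.find_eq_iff]
    · simp only [Set.mem_preimage, Set.mem_singleton_iff, Set.mem_union, Set.mem_inter_iff,
        Set.mem_setOf_eq, hex, false_and, false_or, Set.mem_compl_iff, not_false_iff, true_and]
      rw [posN, dif_neg hex]
      by_cases hp : p = 0 <;> simp [hp, eq_comm]
  rw [this]
  refine MeasurableSet.union (hE.inter (MeasurableSet.inter ?_ ?_)) (hE.compl.inter ?_)
  · exact measurable_shift _ (measurable_Mk N)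
  · exact MeasurableSet.biInter (Set.to_countable _)
      (fun q _ => (measurable_shift _ (measurable_Mk N)).compl)
  · by_cases hp : p = 0 <;> simp [hp]

lemma measurable_gapN (N : ℕ) : Measurable (gapN N) := by
  apply measurable_to_countable'
  intro p
  classical
  have hE : MeasurableSet {x : ℤ → Bool | ∃ n : ℕ, shift ((n : ℤ) + 1) x ∈ Mk N} := by
    have : {x : ℤ → Bool | ∃ n : ℕ, shift ((n : ℤ) + 1) x ∈ Mk N}
        = ⋃ n : ℕ, (fun x => shift ((n : ℤ) + 1) x) ⁻¹' Mk N := by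
      ext x; simp [Set.mem_iUnion]
    rw [this]
    exact MeasurableSet.iUnion fun n => measurable_shift _ (measurable_Mk N)
  have : gapN N ⁻¹' {p} =
      ({x : ℤ → Bool | ∃ n : ℕ, shift ((n : ℤ) + 1) x ∈ Mk N} ∩
        ((fun x => shift ((p : ℤ) + 1) x) ⁻¹' Mk N ∩
          ⋂ q ∈ Finset.range p, ((fun x => shift ((q : ℤ) + 1) x) ⁻¹' Mk N)ᶜ)) ∪
      ({x : ℤ → Bool | ∃ n : ℕ, shift ((n : ℤ) + 1) x ∈ Mk N}ᶜ ∩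
        (if p = 0 then Set.univ else ∅)) := by
    ext x
    by_cases hex : ∃ n : ℕ, shift ((n : ℤ) + 1) x ∈ Mk N
    · simp only [Set.mem_preimage, Set.mem_singleton_iff, Set.mem_union, Set.mem_inter_iff,
        Set.mem_setOf_eq, hex, true_and, Set.mem_compl_iff, not_true, false_and, or_false,
        Set.mem_iInter, Finset.mem_range]
      rw [gapN, dif_pos hex, Nat.find_eq_iff]
    · simp only [Set.mem_preimage, Set.mem_singleton_iff, Set.mem_union, Set.mem_inter_iff,
        Set.mem_setOf_eq, hex, false_and, false_or, Set.mem_compl_iff, not_false_iff, true_and]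
      rw [gapN, dif_neg hex]
      by_cases hp : p = 0 <;> simp [hp, eq_comm]
  rw [this]
  refine MeasurableSet.union (hE.inter (MeasurableSet.inter ?_ ?_)) (hE.compl.inter ?_)
  · exact measurable_shift _ (measurable_Mk N)
  · exact MeasurableSet.biInter (Set.to_countable _)
      (fun q _ => (measurable_shift _ (measurable_Mk N)).compl)
  · by_cases hp : p = 0 <;> simp [hp]

lemma measurable_colorF (a1 : ℕ) : Measurable (colorF a1) := by
  have h : colorF a1 = (fun pg : ℕ × ℕ => Fc a1 (pg.1 + pg.2 + 1) pg.1) ∘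
      (fun x => (posN (9 * a1 * a1) x, gapN (9 * a1 * a1) x)) := by
    funext x
    simp only [Function.comp_apply, colorF, lenN]
  rw [h]
  exact (measurable_of_countable _).comp
    ((measurable_posN _).prodMk (measurable_gapN _))

end BCN


namespace BCN

open Topology Filter Set

/-- The set of `s`-periodic points. -/
def Per (s : ℤ) : Set (ℤ → Bool) := {x | shift s x = x}

lemma isClosed_Per (s : ℤ) : IsClosed (Per s) := by
  have : Per s = ⋂ n : ℤ, {x : ℤ → Bool | x (n + s) = x n} := by
    ext x
    constructor
    · intro h; simp only [Set.mem_iInter, Set.mem_setOf_eq]; intro n; exact congrFun h n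
    · intro h; funext n; exact Set.mem_iInter.1 h n
  rw [this]
  exact isClosed_iInter fun n =>
    isClosed_eq (continuous_apply (n + s)) (continuous_apply n)

lemma exists_nonper (x₀ : ℤ → Bool) (I : Finset ℤ) {s : ℤ} (hs : s ≠ 0) :
    ∃ y : ℤ → Bool, (∀ i ∈ I, y i = x₀ i) ∧ shift s y ≠ y := by
  classical
  set w : ℕ := I.sup Int.natAbs with hw
  have hIw : ∀ i ∈ I, i.natAbs ≤ w := fun i hi => Finset.le_sup hi
  refine ⟨fun j => if j ∈ I then x₀ j else decide (j = (w : ℤ) + s.natAbs + 1), ?_, ?_⟩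
  · intro i hi; simp [hi]
  · intro hcon
    have h0 : ((w : ℤ) + s.natAbs + 1) ∉ I := by
      intro h; have := hIw _ h; omega
    have h1 : ((w : ℤ) + s.natAbs + 1) + s ∉ I := by
      intro h; have := hIw _ h; omega
    have h2 : ((w : ℤ) + s.natAbs + 1) + s ≠ (w : ℤ) + s.natAbs + 1 := by omega
    have := congrFun hcon ((w : ℤ) + s.natAbs + 1)
    rw [shift] at this
    simp only [h0, h1, if_neg, if_false] at this
    simp [h2] at this
    exact hs this

lemma dense_compl_Per {s : ℤ} (hs : s ≠ 0) : Dense (Per s)ᶜ := by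
  rw [dense_iff_inter_open]
  rintro U hU ⟨x₀, hx₀⟩
  obtain ⟨I, u, hIu, hpi⟩ := isOpen_pi_iff.1 hU x₀ hx₀
  obtain ⟨y, hyI, hyper⟩ := exists_nonper x₀ I hs
  refine ⟨y, ?_, hyper⟩
  apply hpi
  intro i hi
  have hi' : i ∈ I := hi
  rw [hyI i hi']
  exact (hIu i hi').2

lemma freePart_residual : FreePart ∈ residual (ℤ → Bool) := by
  have : FreePart = ⋂ s : ℤ, {x : ℤ → Bool | s ≠ 0 → shift s x ≠ x} := by
    ext x; simp [FreePart]
  rw [this]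
  rw [countable_iInter_mem]
  intro s
  by_cases hs : s = 0
  · have : {x : ℤ → Bool | s ≠ 0 → shift s x ≠ x} = Set.univ := by
      ext x; simp [hs]
    rw [this]; exact univ_mem
  · have : {x : ℤ → Bool | s ≠ 0 → shift s x ≠ x} = (Per s)ᶜ := by
      ext x; simp [hs, Per]
    rw [this]
    exact residual_of_dense_open (isClosed_Per s).isOpen_compl (dense_compl_Per hs)

section NoTwo

variable {a : ℕ} {c : {x : ℤ → Bool // x ∈ FreePart} → Fin 2}

/-- Color alternation along `a`-steps. -/
lemma alternation
    (hproper : ∀ (x : {x : ℤ → Bool // x ∈ FreePart}) (h : shift (a : ℤ) x.1 ∈ FreePart),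
      c x ≠ c ⟨shift (a : ℤ) x.1, h⟩)
    (m : ℕ) (x : ℤ → Bool) (hx : x ∈ FreePart) :
    ((c ⟨shift ((m * a : ℕ) : ℤ) x, freePart_shift hx _⟩).val + m) % 2
      = (c ⟨x, hx⟩).val % 2 := by
  induction m with
  | zero =>
    have : c ⟨shift ((0 * a : ℕ) : ℤ) x, freePart_shift hx _⟩ = c ⟨x, hx⟩ := by
      congr 1
      apply Subtype.ext
      simp
    rw [this]
    omega
  | succ m ih =>
    have hz : shift ((m * a : ℕ) : ℤ) x ∈ FreePart := freePart_shift hx _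
    have hz' : shift (a : ℤ) (shift ((m * a : ℕ) : ℤ) x) ∈ FreePart := freePart_shift hz _
    have hpt : shift (((m + 1) * a : ℕ) : ℤ) x = shift (a : ℤ) (shift ((m * a : ℕ) : ℤ) x) := by
      rw [shift_shift]
      congr 1
      push_cast
      ring
    have hcc : c ⟨shift (((m + 1) * a : ℕ) : ℤ) x, freePart_shift hx _⟩
        = c ⟨shift (a : ℤ) (shift ((m * a : ℕ) : ℤ) x), hz'⟩ := by
      congr 1
      exact Subtype.ext hpt
    have hne := hproper ⟨shift ((m * a : ℕ) : ℤ) x, hz⟩ hz'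
    have hv1 : (c ⟨shift ((m * a : ℕ) : ℤ) x, hz⟩).val < 2 := (c _).isLt
    have hv2 : (c ⟨shift (a : ℤ) (shift ((m * a : ℕ) : ℤ) x), hz'⟩).val < 2 := (c _).isLt
    have hne' : (c ⟨shift ((m * a : ℕ) : ℤ) x, hz⟩).val
        ≠ (c ⟨shift (a : ℤ) (shift ((m * a : ℕ) : ℤ) x), hz'⟩).val := by
      intro h
      exact hne (Fin.ext h)
    rw [hcc]
    omega

end NoTwo

end BCN


namespace BCN

open Topology Filter Set

lemma mem_B_iff (c : {x : ℤ → Bool // x ∈ FreePart} → Fin 2) (x : ℤ → Bool) :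
    x ∈ (Subtype.val '' (c ⁻¹' {0}) : Set (ℤ → Bool))
      ↔ ∃ hx : x ∈ FreePart, c ⟨x, hx⟩ = 0 := by
  constructor
  · rintro ⟨⟨x', hx'⟩, hcx, rfl⟩
    exact ⟨hx', hcx⟩
  · rintro ⟨hx, hcx⟩
    exact ⟨⟨x, hx⟩, hcx, rfl⟩

theorem no_two_coloring (a : ℕ) (ha : 1 ≤ a)
    (c : {x : ℤ → Bool // x ∈ FreePart} → Fin 2) (hc : Measurable c)
    (hproper : ∀ (x : {x : ℤ → Bool // x ∈ FreePart}) (h : shift (a : ℤ) x.1 ∈ FreePart),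
      c x ≠ c ⟨shift (a : ℤ) x.1, h⟩) : False := by
  classical
  set B : Set (ℤ → Bool) := Subtype.val '' (c ⁻¹' {0}) with hBdef
  have hB : MeasurableSet B :=
    measurableSet_freePart.subtype_image (hc (measurableSet_singleton 0))
  obtain ⟨U, hUo, hUeq⟩ := MeasurableSet.residualEq_isOpen hB
  have hEiff : ∀ᶠ z in residual (ℤ → Bool), (z ∈ B ↔ z ∈ U) :=
    hUeq.mono fun z h => iff_of_eq h
  rcases Set.eq_empty_or_nonempty U with hUe | ⟨x₀, hx₀⟩
  · -- B is meager, so both x and shift a x generically have color 1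
    have hnotB : ∀ᶠ z in residual (ℤ → Bool), z ∉ B := by
      subst hUe
      exact hEiff.mono fun z h hz => (h.1 hz)
    have hmap : Tendsto (fun x : ℤ → Bool => shift (a : ℤ) x)
        (residual _) (residual _) :=
      tendsto_residual_of_isOpenMap (continuous_shift _) (shiftHomeo (a : ℤ)).isOpenMap
    have hG : ({z | z ∉ B} ∩ (fun x => shift (a : ℤ) x) ⁻¹' {z | z ∉ B} ∩ FreePart)
        ∈ residual (ℤ → Bool) :=
      inter_mem (inter_mem hnotB (hmap hnotB)) freePart_residual
    obtain ⟨x, ⟨hx1, hx2⟩, hxf⟩ := (dense_of_mem_residual hG).nonempty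
    have hyf : shift (a : ℤ) x ∈ FreePart := freePart_shift hxf _
    have hc1 : c ⟨x, hxf⟩ = 1 := by
      have : ¬ (c ⟨x, hxf⟩ = 0) := fun h => hx1 ((mem_B_iff c x).2 ⟨hxf, h⟩)
      omega
    have hc2 : c ⟨shift (a : ℤ) x, hyf⟩ = 1 := by
      have : ¬ (c ⟨shift (a : ℤ) x, hyf⟩ = 0) := fun h =>
        hx2 ((mem_B_iff c _).2 ⟨hyf, h⟩)
      omega
    exact hproper ⟨x, hxf⟩ hyf (by rw [hc1, hc2])
  · -- B is comeager in a cylinder V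
    obtain ⟨I, u, hIu, hpi⟩ := isOpen_pi_iff.1 hUo x₀ hx₀
    set w : ℕ := I.sup Int.natAbs with hw
    have hIw : ∀ i ∈ I, i.natAbs ≤ w := fun i hi => Finset.le_sup hi
    set m : ℕ := 2 * w + 1 with hm
    set s : ℤ := ((m * a : ℕ) : ℤ) with hs
    have hs1 : (2 * w + 1 : ℤ) ≤ s := by
      rw [hs]
      have h' : 2 * w + 1 ≤ m * a := Nat.le_mul_of_pos_right _ (by omega)
      exact_mod_cast h'
    set V : Set (ℤ → Bool) := {y | ∀ i ∈ I, y i = x₀ i} with hV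
    have hVU : V ⊆ U := by
      intro y hy
      apply hpi
      intro i hi
      have hi' : i ∈ I := hi
      rw [hy i hi']
      exact (hIu i hi').2
    have hVopen : IsOpen V := by
      have : V = ⋂ i ∈ I, (fun y : ℤ → Bool => y i) ⁻¹' {x₀ i} := by
        ext y; simp [hV]
      rw [this]
      exact isOpen_biInter_finset fun i _ =>
        (continuous_apply i).isOpen_preimage _ (isOpen_discrete _)
    set W : Set (ℤ → Bool) := V ∩ (fun x => shift s x) ⁻¹' V with hW
    have hWopen : IsOpen W := hVopen.inter (hVopen.preimage (continuous_shift s))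
    have hWne : W.Nonempty := by
      refine ⟨fun j => if j ∈ I then x₀ j else if h : j - s ∈ I then x₀ (j - s) else false,
        ?_, ?_⟩
      · intro i hi; simp [hi]
      · intro i hi
        show (if i + s ∈ I then x₀ (i + s)
          else if h : i + s - s ∈ I then x₀ (i + s - s) else false) = x₀ i
        have h1 : i + s ∉ I := by
          intro h
          have := hIw _ h
          have := hIw _ hi
          omega
        have h2 : i + s - s ∈ I := by simpa using hi
        rw [if_neg h1, dif_pos h2]
        congr 1
        omega
    have hmap : Tendsto (fun x : ℤ → Bool => shift s x) (residual _) (residual _) :=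
      tendsto_residual_of_isOpenMap (continuous_shift _) (shiftHomeo s).isOpenMap
    have hG : ({z | z ∈ B ↔ z ∈ U} ∩ (fun x => shift s x) ⁻¹' {z | z ∈ B ↔ z ∈ U} ∩ FreePart)
        ∈ residual (ℤ → Bool) :=
      inter_mem (inter_mem hEiff (hmap hEiff)) freePart_residual
    obtain ⟨x, hxW, ⟨hx1, hx2⟩, hxf⟩ :=
      (dense_of_mem_residual hG).inter_open_nonempty W hWopen hWne
    have hxB : x ∈ B := hx1.2 (hVU hxW.1)
    have hyB : shift s x ∈ B := hx2.2 (hVU hxW.2)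
    obtain ⟨hxf', hc1⟩ := (mem_B_iff c x).1 hxB
    obtain ⟨hyf', hc2⟩ := (mem_B_iff c _).1 hyB
    have halt := alternation (a := a) (c := c) hproper m x hxf'
    have he : c ⟨shift ((m * a : ℕ) : ℤ) x, freePart_shift hxf' _⟩
        = c ⟨shift s x, hyf'⟩ := rfl
    rw [he, hc1, hc2] at halt
    simp only [Fin.val_zero] at halt
    omega

end BCN


open BCN in
/-- If `aₙ < 2·a₁`, then `χ(a₁,…,aₙ) = 3`. -/
theorem borelChromatic_eq_three_of_max_lt_two_min
    (A : Finset ℕ) (hA : A.Nonempty) (hpos : ∀ a ∈ A, 0 < a) (hgcd : A.gcd id = 1)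
    (hlt : A.max' hA < 2 * A.min' hA) :
    borelChromatic A = 3 := by
  obtain ⟨x₀, hx₀⟩ := freePart_nonempty
  set a1 : ℕ := A.min' hA with ha1
  set an : ℕ := A.max' hA with han
  have h1 : 1 ≤ a1 := hpos _ (A.min'_mem hA)
  have h2 : an < 2 * a1 := hlt
  have h3mem : 3 ∈ {k : ℕ | ∃ c : {x : ℤ → Bool // x ∈ FreePart} → Fin k,
      IsBorelColoring A c} := by
    refine ⟨fun x => colorF a1 x.1, ?_, ?_⟩
    · exact (measurable_colorF a1).comp measurable_subtype_coe
    · intro x a haA h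
      exact (colorF_proper h1 h2 (A.min'_le a haA) (A.le_max' a haA) x.2).symm
  have hlow : ∀ k ∈ {k : ℕ | ∃ c : {x : ℤ → Bool // x ∈ FreePart} → Fin k,
      IsBorelColoring A c}, 3 ≤ k := by
    rintro k ⟨c, hcm, hcp⟩
    by_contra hk3
    push_neg at hk3
    interval_cases k
    · exact (c ⟨x₀, hx₀⟩).elim0
    · exact hcp ⟨x₀, hx₀⟩ a1 (A.min'_mem hA) (freePart_shift hx₀ _) (Subsingleton.elim _ _)
    · exact no_two_coloring a1 h1 c hcm (fun x h => hcp x a1 (A.min'_mem hA) h)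
  exact le_antisymm (Nat.sInf_le h3mem) (le_csInf ⟨3, h3mem⟩ hlow)
end

section
/- Let S = {±a_1,…,±a_n} where 0 < a_1 < … < a_n and gcd(a_1,…,a_n) = 1. If either a_i ≡ 1 (mod 3) for all 1 ≤ i ≤ n, or a_i ≡ 2 (mod 3) for all 1 ≤ i ≤ n, then χ(a_1,…,a_n) = 3. -/
open Set Function in
abbrev Pt := ℤ → Bool

open Set Function

lemma shift_shift {α : Type*} (s t : ℤ) (x : ℤ → α) : shift t (shift s x) = shift (s + t) x := by
  funext n; simp only [shift]; congr 1; ring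

lemma shift_zero {α : Type*} (x : ℤ → α) : shift 0 x = x := by funext n; simp [shift]

lemma shift_apply {α : Type*} (s : ℤ) (x : ℤ → α) (n : ℤ) : shift s x n = x (n + s) := rfl

lemma FreePart.shift_mem {x : Pt} (hx : x ∈ FreePart) (k : ℤ) : shift k x ∈ FreePart := by
  intro s hs heq
  apply hx s hs
  rw [shift_shift] at heq
  have h3 := congrArg (shift (-k)) heq
  rw [shift_shift, shift_shift, show k + s + -k = s by ring, show k + -k = 0 by ring,
    shift_zero] at h3
  exact h3

/-- Window condition: windows of radius `m` distinguish `x` from its shifts by `0<j<N`. -/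
def Q (N : ℕ) (x : Pt) (m : ℕ) : Prop :=
  ∀ j : ℕ, 0 < j → j < N → ∃ i : ℤ, -(m:ℤ) ≤ i ∧ i ≤ (m:ℤ) - j ∧ x i ≠ x (i + j)

lemma exists_Q (N : ℕ) {x : Pt} (hx : x ∈ FreePart) : ∃ m, Q N x m := by
  have h1 : ∀ j : ℕ, ∃ n : ℤ, (0 < j → j < N → x (n + j) ≠ x n) := by
    intro j
    by_cases hj : 0 < j ∧ j < N
    · have hne : shift (j : ℤ) x ≠ x := hx _ (by exact_mod_cast hj.1.ne')
      obtain ⟨n, hn⟩ := Function.ne_iff.1 hne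
      exact ⟨n, fun _ _ => hn⟩
    · exact ⟨0, fun h1 h2 => absurd ⟨h1, h2⟩ hj⟩
  choose nf hnf using h1
  refine ⟨(Finset.range N).sup (fun j => (nf j).natAbs + j), ?_⟩
  intro j hj0 hjN
  have hle : (nf j).natAbs + j ≤ (Finset.range N).sup (fun j => (nf j).natAbs + j) :=
    Finset.le_sup (f := fun j => (nf j).natAbs + j) (Finset.mem_range.2 hjN)
  exact ⟨nf j, by omega, by omega, fun h => (hnf j hj0 hjN) h.symm⟩

noncomputable def W (N : ℕ) (x : Pt) : ℕ := sInf {m | Q N x m}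

lemma Q_W (N : ℕ) {x : Pt} (hx : x ∈ FreePart) : Q N x (W N x) :=
  Nat.sInf_mem (exists_Q N hx)

def win (n : ℕ) (x : Pt) : List Bool := (List.range (2*n+1)).map (fun i : ℕ => x ((i : ℤ) - (n : ℤ)))

def bcode : List Bool → ℕ := fun l => l.foldr (fun b acc => cond b 1 0 + 2*acc) 0

lemma bcode_cons (b : Bool) (t : List Bool) : bcode (b :: t) = cond b 1 0 + 2 * bcode t := rfl

lemma bcode_inj : ∀ l₁ l₂ : List Bool, l₁.length = l₂.length → bcode l₁ = bcode l₂ → l₁ = l₂ := by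
  intro l₁
  induction l₁ with
  | nil => intro l₂ h _; exact (List.length_eq_zero_iff.1 h.symm).symm
  | cons b t ih =>
    intro l₂ h hc
    cases l₂ with
    | nil => simp at h
    | cons b' t' =>
      rw [bcode_cons, bcode_cons] at hc
      have hb : b = b' := by cases b <;> cases b' <;> simp at hc ⊢ <;> omega
      subst hb
      have : bcode t = bcode t' := by cases b <;> simp at hc <;> omega
      simp only [List.length_cons, Nat.succ.injEq] at h
      rw [ih t' h this]

lemma win_length (n : ℕ) (x : Pt) : (win n x).length = 2*n+1 := by
  rw [win, List.length_map, List.length_range]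

lemma win_eq_iff {n : ℕ} {x y : Pt} :
    win n x = win n y ↔ ∀ i : ℤ, -(n:ℤ) ≤ i → i ≤ n → x i = y i := by
  constructor
  · intro h i hi1 hi2
    have hk : ∃ k : ℕ, k < 2*n+1 ∧ (k : ℤ) - n = i := ⟨(i + n).toNat, by omega, by omega⟩
    obtain ⟨k, hk1, hk2⟩ := hk
    have h' : (win n x)[k]'(by rw [win_length]; exact hk1) =
        (win n y)[k]'(by rw [win_length]; exact hk1) := by simp only [h]
    simp only [win, List.getElem_map, List.getElem_range, hk2] at h'
    exact h'
  · intro h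
    apply List.ext_getElem (by rw [win_length, win_length])
    intro k h1 h2
    simp only [win, List.getElem_map, List.getElem_range]
    rw [win_length] at h1
    exact h ((k:ℤ) - n) (by omega) (by omega)

noncomputable def fcol (N : ℕ) (x : Pt) : ℕ := Nat.pair (W N x) (bcode (win (W N x) x))

lemma fcol_ne (N : ℕ) {x : Pt} (hx : x ∈ FreePart) {j : ℤ} (hj : j ≠ 0) (hjN : j.natAbs < N) :
    fcol N (shift j x) ≠ fcol N x := by
  intro heq
  rw [fcol, fcol] at heq
  have h1 := Nat.pair_eq_pair.1 heq
  set m := W N x with hm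
  rw [h1.1] at h1
  have hwin : win m (shift j x) = win m x :=
    bcode_inj _ _ (by rw [win_length, win_length]) h1.2
  have hcoord : ∀ i : ℤ, -(m:ℤ) ≤ i → i ≤ m → x (i + j) = x i := by
    intro i hi1 hi2
    have := win_eq_iff.1 hwin i hi1 hi2
    rwa [shift_apply] at this
  have hQ := Q_W N hx
  rw [← hm] at hQ
  rcases lt_or_gt_of_ne hj with hneg | hpos
  · obtain ⟨i, hi1, hi2, hi3⟩ := hQ j.natAbs (by omega) hjN
    apply hi3
    have := hcoord (i + j.natAbs) (by omega) (by omega)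
    rw [add_assoc] at this
    rw [show (j.natAbs : ℤ) + j = 0 by omega, add_zero] at this
    exact this
  · obtain ⟨i, hi1, hi2, hi3⟩ := hQ j.natAbs (by omega) hjN
    apply hi3
    have := hcoord i hi1 (by omega)
    rw [show (j.natAbs : ℤ) = j by omega]
    exact this.symm

noncomputable def Mset (N : ℕ) (n : ℕ) : Set Pt :=
  {x | fcol N x = n ∧ ∀ m, m < n → ∀ j : ℤ, j ≠ 0 → j.natAbs < N → shift j x ∉ Mset N m}
termination_by n

lemma mem_Mset {N n : ℕ} {x : Pt} :
    x ∈ Mset N n ↔ fcol N x = n ∧ ∀ m, m < n → ∀ j : ℤ, j ≠ 0 → j.natAbs < N → shift j x ∉ Mset N m := by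
  rw [Mset]; rfl

noncomputable def MK (N : ℕ) : Set Pt := ⋃ n, Mset N n

lemma MK_indep (N : ℕ) {x : Pt} (hx : x ∈ FreePart) (hxM : x ∈ MK N) {j : ℤ}
    (hj : j ≠ 0) (hjN : j.natAbs < N) (hjM : shift j x ∈ MK N) : False := by
  obtain ⟨_, ⟨n, rfl⟩, hn⟩ := hxM
  obtain ⟨_, ⟨m, rfl⟩, hm⟩ := hjM
  rcases lt_trichotomy m n with h | h | h
  · exact (mem_Mset.1 hn).2 m h j hj hjN hm
  · subst h
    exact fcol_ne N hx hj hjN ((mem_Mset.1 hm).1.trans (mem_Mset.1 hn).1.symm)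
  · have := (mem_Mset.1 hm).2 n h (-j) (by omega) (by omega)
    rw [shift_shift, add_neg_cancel, shift_zero] at this
    exact this hn

lemma MK_max (N : ℕ) (hN : 0 < N) {x : Pt} (hx : x ∈ FreePart) :
    ∃ j : ℤ, j.natAbs < N ∧ shift j x ∈ MK N := by
  by_contra hcon
  push_neg at hcon
  have hmem : x ∈ Mset N (fcol N x) := by
    rw [mem_Mset]
    refine ⟨rfl, fun m hm j hj hjN hmem => ?_⟩
    exact hcon j hjN (mem_iUnion.2 ⟨m, hmem⟩)
  have := hcon 0 (by simpa using hN)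
  rw [shift_zero] at this
  exact this (mem_iUnion.2 ⟨fcol N x, hmem⟩)

/-! ### Marker distances and the coloring -/

noncomputable def pDist (N : ℕ) (x : Pt) : ℕ := sInf {n : ℕ | shift (-(n:ℤ)) x ∈ MK N}

noncomputable def gDist (N : ℕ) (x : Pt) : ℕ := sInf {n : ℕ | 0 < n ∧ shift (n:ℤ) x ∈ MK N}

lemma exists_prev (N : ℕ) (hN : 0 < N) {x : Pt} (hx : x ∈ FreePart) :
    ∃ n : ℕ, shift (-(n:ℤ)) x ∈ MK N := by
  obtain ⟨j, hj1, hj2⟩ := MK_max N hN (FreePart.shift_mem hx (-(N:ℤ)))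
  rw [shift_shift] at hj2
  refine ⟨(-(-(N:ℤ) + j)).toNat, ?_⟩
  rw [show -(((-(-(N:ℤ) + j)).toNat : ℕ) : ℤ) = -(N:ℤ) + j by omega]
  exact hj2

lemma exists_next (N : ℕ) (hN : 0 < N) {x : Pt} (hx : x ∈ FreePart) :
    ∃ n : ℕ, 0 < n ∧ shift (n:ℤ) x ∈ MK N := by
  obtain ⟨j, hj1, hj2⟩ := MK_max N hN (FreePart.shift_mem hx ((N:ℤ)))
  rw [shift_shift] at hj2
  refine ⟨((N:ℤ) + j).toNat, by omega, ?_⟩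
  rw [show ((((N:ℤ) + j).toNat : ℕ) : ℤ) = (N:ℤ) + j by omega]
  exact hj2

lemma pDist_eq {N q : ℕ} {y : Pt} (h1 : shift (-(q:ℤ)) y ∈ MK N)
    (h2 : ∀ m : ℕ, m < q → shift (-(m:ℤ)) y ∉ MK N) : pDist N y = q := by
  refine le_antisymm (Nat.sInf_le h1) (le_of_not_gt fun h => ?_)
  exact h2 _ h (Nat.sInf_mem (⟨q, h1⟩ : Set.Nonempty {n : ℕ | shift (-(n:ℤ)) y ∈ MK N}))

lemma gDist_eq {N g : ℕ} {y : Pt} (hg : 0 < g) (h1 : shift (g:ℤ) y ∈ MK N)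
    (h2 : ∀ m : ℕ, 0 < m → m < g → shift (m:ℤ) y ∉ MK N) : gDist N y = g := by
  refine le_antisymm (Nat.sInf_le ⟨hg, h1⟩) (le_of_not_gt fun h => ?_)
  have hmem := Nat.sInf_mem (⟨g, hg, h1⟩ : Set.Nonempty {n : ℕ | 0 < n ∧ shift (n:ℤ) y ∈ MK N})
  exact h2 _ hmem.1 h hmem.2

/-- Residue for splitting a gap `g`: avoids `r` and `g - r` mod 3. -/
def sres (r g : ℕ) : ℕ :=
  if 0 ≠ r ∧ (g - 0) % 3 ≠ r then 0 else if 1 ≠ r ∧ (g - 1) % 3 ≠ r then 1 else 2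

/-- Offset of the phase-defect inside a gap of length `g`. -/
def tOf (amax r g : ℕ) : ℕ := (amax + 1) + (sres r g + 3 - (amax + 1) % 3) % 3

lemma tOf_facts {amax r g : ℕ} (hr1 : 1 ≤ r) (hr2 : r ≤ 2) (hg : 2*amax + 6 ≤ g) :
    amax < tOf amax r g ∧ tOf amax r g + amax < g ∧
      tOf amax r g % 3 ≠ r ∧ (g - tOf amax r g) % 3 ≠ r := by
  rw [tOf, sres]
  split_ifs with h1 h2 <;> omega

lemma tOf_ge (amax r g : ℕ) : amax < tOf amax r g := by rw [tOf]; omega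

noncomputable def colN (N amax r : ℕ) (x : Pt) : ℕ :=
  if pDist N x < tOf amax r (gDist N (shift (-(pDist N x : ℤ)) x)) then pDist N x % 3
  else (pDist N x - tOf amax r (gDist N (shift (-(pDist N x : ℤ)) x))) % 3

lemma colN_lt (N amax r : ℕ) (x : Pt) : colN N amax r x < 3 := by
  rw [colN]; split <;> omega

theorem colN_ne {amax r : ℕ} (hr1 : 1 ≤ r) (hr2 : r ≤ 2) {N : ℕ} (hN : N = 2*amax + 6)
    {x : Pt} (hx : x ∈ FreePart) {a : ℕ} (ha1 : 0 < a) (ha2 : a ≤ amax) (har : a % 3 = r) :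
    colN N amax r x ≠ colN N amax r (shift (a:ℤ) x) := by
  have hN0 : 0 < N := by omega
  set P : ℤ → Prop := fun k => shift k x ∈ MK N with hP
  -- independence in orbit coordinates
  have Zindep : ∀ k l : ℤ, P k → P l → k ≠ l → N ≤ (k - l).natAbs := by
    intro k l hk hl hne
    by_contra hcon
    refine MK_indep N (FreePart.shift_mem hx l) hl (j := k - l) (by omega) (by omega) ?_
    rw [shift_shift, show l + (k - l) = k by ring]
    exact hk
  set p := pDist N x with hp
  have Z1 : P (-(p:ℤ)) := Nat.sInf_mem (exists_prev N hN0 hx)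
  have Z2 : ∀ m : ℕ, m < p → ¬ P (-(m:ℤ)) := by
    intro m hm hmem
    exact Nat.notMem_of_lt_sInf hm hmem
  set b := shift (-(p:ℤ)) x with hb
  have hbF : b ∈ FreePart := FreePart.shift_mem hx _
  set g := gDist N b with hg
  have hgn := Nat.sInf_mem (exists_next N hN0 hbF)
  have Z3 : P (-(p:ℤ) + g) := by
    have := hgn.2
    rwa [hb, shift_shift] at this
  have hg0 : 0 < g := hgn.1
  have Z4 : ∀ m : ℕ, 0 < m → m < g → ¬ P (-(p:ℤ) + m) := by
    intro m hm1 hm2 hmem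
    refine Nat.notMem_of_lt_sInf (hg ▸ hm2) (⟨hm1, ?_⟩ : _ ∈ {n : ℕ | 0 < n ∧ shift (n:ℤ) b ∈ MK N})
    rw [hb, shift_shift]
    exact hmem
  have hpg : p < g := by
    by_contra hcon
    push_neg at hcon
    have : P (-(((p - g : ℕ) : ℕ) : ℤ)) := by
      rw [show -(((p - g : ℕ) : ℕ) : ℤ) = -(p:ℤ) + g by omega]
      exact Z3
    exact Z2 (p - g) (by omega) this
  have hgN : N ≤ g := by
    have := Zindep (-(p:ℤ) + g) (-(p:ℤ)) Z3 Z1 (by omega)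
    omega
  obtain ⟨ht1, ht2, ht3, ht4⟩ := tOf_facts hr1 hr2 (by omega : 2*amax + 6 ≤ g)
  clear_value p b g
  set y := shift (a:ℤ) x with hy
  have hshifty : ∀ m : ℕ, shift (-(m:ℤ)) y = shift ((a:ℤ) - m) x := by
    intro m
    have harith : (a:ℤ) + -(m:ℤ) = (a:ℤ) - m := by ring
    rw [hy, shift_shift, harith]
  by_cases hcase : p + a < g
  · -- same block
    have hq : pDist N y = p + a := by
      apply pDist_eq
      · rw [hshifty, show (a:ℤ) - ((p + a : ℕ) : ℤ) = -(p:ℤ) by push_cast; ring]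
        exact Z1
      · intro m hm hmem
        rw [hshifty] at hmem
        by_cases hma : a ≤ m
        · rw [show (a:ℤ) - m = -(((m - a : ℕ) : ℕ) : ℤ) by omega] at hmem
          exact Z2 (m - a) (by omega) hmem
        · rw [show (a:ℤ) - m = -(p:ℤ) + ((p + a - m : ℕ) : ℤ) by omega] at hmem
          exact Z4 (p + a - m) (by omega) (by omega) hmem
    have hbase : shift (-(pDist N y : ℤ)) y = b := by
      rw [hq, hshifty, show (a:ℤ) - ((p + a : ℕ) : ℤ) = -(p:ℤ) by push_cast; ring]
      exact hb.symm
    rw [colN, colN, hbase, hq, ← hp, ← hb, ← hg]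
    split_ifs <;> omega
  · -- crossing the marker at -p + g
    push_neg at hcase
    have hq : pDist N y = p + a - g := by
      apply pDist_eq
      · rw [hshifty, show (a:ℤ) - ((p + a - g : ℕ) : ℤ) = -(p:ℤ) + g by omega]
        exact Z3
      · intro m hm hmem
        rw [hshifty] at hmem
        have := Zindep ((a:ℤ) - m) (-(p:ℤ) + g) hmem Z3 (by omega)
        omega
    have hbase : shift (-(pDist N y : ℤ)) y = shift (-(p:ℤ) + g) x := by
      rw [hq, hshifty, show (a:ℤ) - ((p + a - g : ℕ) : ℤ) = -(p:ℤ) + g by omega]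
    rw [colN, colN, hbase, hq, ← hp, ← hb, ← hg]
    have hqlt : p + a - g < tOf amax r (gDist N (shift (-(p:ℤ) + g) x)) := by
      have := tOf_ge amax r (gDist N (shift (-(p:ℤ) + g) x))
      omega
    rw [if_pos hqlt]
    have hpt : tOf amax r g < p := by omega
    rw [if_neg (by omega : ¬ p < tOf amax r g)]
    omega

/-! ### Measurability -/

lemma measurable_shiftMap (s : ℤ) : Measurable (fun x : Pt => shift s x) :=
  measurable_pi_iff.2 fun n => measurable_pi_apply (n + s)

lemma measurableSet_coord (i : ℤ) (b : Bool) : MeasurableSet {x : Pt | x i = b} := by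
  have h : {x : Pt | x i = b} = (fun f : Pt => f i) ⁻¹' {b} := by
    ext x; simp
  rw [h]
  exact measurable_pi_apply i (MeasurableSet.singleton b)

lemma measurableSet_coord_ne (i j : ℤ) : MeasurableSet {x : Pt | x i ≠ x j} := by
  have : {x : Pt | x i ≠ x j} =
      ({x : Pt | x i = true} ∩ {x : Pt | x j = false}) ∪
      ({x : Pt | x i = false} ∩ {x : Pt | x j = true}) := by
    ext x
    simp only [Set.mem_setOf_eq, Set.mem_union, Set.mem_inter_iff]
    cases hxi : x i <;> cases hxj : x j <;> simp
  rw [this]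
  exact ((measurableSet_coord i true).inter (measurableSet_coord j false)).union
    ((measurableSet_coord i false).inter (measurableSet_coord j true))

lemma measurableSet_Q (N m : ℕ) : MeasurableSet {x : Pt | Q N x m} := by
  have : {x : Pt | Q N x m} = ⋂ (j : ℕ), ⋂ (_ : 0 < j ∧ j < N), ⋃ (i : ℤ),
      ⋃ (_ : -(m:ℤ) ≤ i ∧ i ≤ (m:ℤ) - j), {x : Pt | x i ≠ x (i + j)} := by
    ext x
    simp only [Set.mem_setOf_eq, Set.mem_iInter, Set.mem_iUnion, Q]
    constructor
    · intro h j hj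
      obtain ⟨i, h1, h2, h3⟩ := h j hj.1 hj.2
      exact ⟨i, ⟨h1, h2⟩, h3⟩
    · intro h j hj1 hj2
      obtain ⟨i, ⟨h1, h2⟩, h3⟩ := h j ⟨hj1, hj2⟩
      exact ⟨i, h1, h2, h3⟩
  rw [this]
  exact MeasurableSet.iInter fun j => MeasurableSet.iInter fun _ =>
    MeasurableSet.iUnion fun i => MeasurableSet.iUnion fun _ => measurableSet_coord_ne _ _

lemma measurableSet_sInf_eq {T : ℕ → Set Pt} (hT : ∀ n, MeasurableSet (T n)) (n : ℕ) :
    MeasurableSet {x : Pt | sInf {m : ℕ | x ∈ T m} = n} := by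
  have hset : {x : Pt | sInf {m : ℕ | x ∈ T m} = n} =
      (T n ∩ ⋂ (m : ℕ), ⋂ (_ : m < n), (T m)ᶜ) ∪
      (if n = 0 then ⋂ (m : ℕ), (T m)ᶜ else ∅) := by
    ext x
    simp only [Set.mem_setOf_eq, Set.mem_union, Set.mem_inter_iff, Set.mem_iInter,
      Set.mem_compl_iff]
    constructor
    · intro h
      by_cases hne : ∃ m, x ∈ T m
      · left
        have hmem : sInf {m : ℕ | x ∈ T m} ∈ {m : ℕ | x ∈ T m} := Nat.sInf_mem hne
        rw [h] at hmem
        exact ⟨hmem, fun m hm => Nat.notMem_of_lt_sInf (h ▸ hm)⟩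
      · right
        push_neg at hne
        have h0 : {m : ℕ | x ∈ T m} = ∅ := by
          ext m; simp [hne m]
        rw [h0, Nat.sInf_empty] at h
        simp only [← h, if_true, Set.mem_iInter, Set.mem_compl_iff, reduceIte]
        exact fun m => hne m
    · intro h
      rcases h with ⟨h1, h2⟩ | h
      · refine le_antisymm (Nat.sInf_le h1) (le_of_not_gt fun hcon => ?_)
        exact h2 _ hcon (Nat.sInf_mem (⟨n, h1⟩ : Set.Nonempty {m : ℕ | x ∈ T m}))
      · split_ifs at h with h0
        · subst h0
          have h0 : {m : ℕ | x ∈ T m} = ∅ := by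
            ext m
            simpa using (Set.mem_iInter.1 h) m
          rw [h0, Nat.sInf_empty]
        · exact absurd h (Set.notMem_empty x)
  rw [hset]
  refine MeasurableSet.union ((hT n).inter (MeasurableSet.iInter fun m =>
    MeasurableSet.iInter fun _ => (hT m).compl)) ?_
  split_ifs
  · exact MeasurableSet.iInter fun m => (hT m).compl
  · exact MeasurableSet.empty

lemma measurableSet_W (N n : ℕ) : MeasurableSet {x : Pt | W N x = n} :=
  measurableSet_sInf_eq (T := fun m => {x : Pt | Q N x m}) (measurableSet_Q N) n

lemma measurableSet_win (n : ℕ) (l : List Bool) : MeasurableSet {x : Pt | win n x = l} := by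
  by_cases hl : l.length = 2*n+1
  · have : {x : Pt | win n x = l} =
        ⋂ (k : ℕ), ⋂ (hk : k < 2*n+1), {x : Pt | x ((k:ℤ) - n) = l[k]'(by omega)} := by
      ext x
      simp only [Set.mem_setOf_eq, Set.mem_iInter]
      constructor
      · intro h k hk
        have h' : (win n x)[k]'(by rw [win_length]; exact hk) = l[k]'(by omega) := by
          simp only [h]
        simpa only [win, List.getElem_map, List.getElem_range] using h'
      · intro h
        apply List.ext_getElem (by rw [win_length, hl])
        intro k h1 h2
        rw [win_length] at h1
        simpa only [win, List.getElem_map, List.getElem_range] using h k h1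
    rw [this]
    exact MeasurableSet.iInter fun k => MeasurableSet.iInter fun hk => measurableSet_coord _ _
  · have : {x : Pt | win n x = l} = ∅ := by
      ext x
      simp only [Set.mem_setOf_eq, Set.mem_empty_iff_false, iff_false]
      intro h
      exact hl (by rw [← h, win_length])
    rw [this]
    exact MeasurableSet.empty

lemma measurableSet_fcol (N k : ℕ) : MeasurableSet {x : Pt | fcol N x = k} := by
  have : {x : Pt | fcol N x = k} = ⋃ (n : ℕ), ⋃ (l : List Bool),
      ⋃ (_ : Nat.pair n (bcode l) = k),
      ({x : Pt | W N x = n} ∩ {x : Pt | win n x = l}) := by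
    ext x
    simp only [Set.mem_setOf_eq, Set.mem_iUnion, Set.mem_inter_iff]
    constructor
    · intro h
      exact ⟨W N x, win (W N x) x, by rw [← h, fcol], rfl, rfl⟩
    · rintro ⟨n, l, hpair, h1, h2⟩
      rw [fcol, h1, h2]
      exact hpair
  rw [this]
  exact MeasurableSet.iUnion fun n => MeasurableSet.iUnion fun l =>
    MeasurableSet.iUnion fun _ => (measurableSet_W N n).inter (measurableSet_win n l)

lemma measurableSet_Mset (N : ℕ) : ∀ n, MeasurableSet (Mset N n) := by
  intro n
  induction n using Nat.strong_induction_on with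
  | _ n ih =>
    have : Mset N n = {x : Pt | fcol N x = n} ∩
        ⋂ (m : ℕ), ⋂ (_ : m < n), ⋂ (j : ℤ), ⋂ (_ : j ≠ 0 ∧ j.natAbs < N),
          (fun x : Pt => shift j x) ⁻¹' (Mset N m)ᶜ := by
      ext x
      rw [mem_Mset]
      simp only [Set.mem_inter_iff, Set.mem_setOf_eq, Set.mem_iInter,
        Set.mem_preimage, Set.mem_compl_iff]
      constructor
      · rintro ⟨h1, h2⟩
        exact ⟨h1, fun m hm j hj => h2 m hm j hj.1 hj.2⟩
      · rintro ⟨h1, h2⟩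
        exact ⟨h1, fun m hm j hj1 hj2 => h2 m hm j ⟨hj1, hj2⟩⟩
    rw [this]
    refine (measurableSet_fcol N n).inter ?_
    exact MeasurableSet.iInter fun m => MeasurableSet.iInter fun hm =>
      MeasurableSet.iInter fun j => MeasurableSet.iInter fun _ =>
        (measurable_shiftMap j) (ih m hm).compl

lemma measurableSet_MK (N : ℕ) : MeasurableSet (MK N) :=
  MeasurableSet.iUnion (measurableSet_Mset N)

lemma measurableSet_pDist (N p : ℕ) : MeasurableSet {x : Pt | pDist N x = p} :=
  measurableSet_sInf_eq (T := fun n => (fun x : Pt => shift (-(n:ℤ)) x) ⁻¹' MK N)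
    (fun n => (measurable_shiftMap _) (measurableSet_MK N)) p

lemma measurableSet_gDist (N g : ℕ) : MeasurableSet {x : Pt | gDist N x = g} := by
  have : ∀ n : ℕ, MeasurableSet {x : Pt | 0 < n ∧ shift (n:ℤ) x ∈ MK N} := by
    intro n
    by_cases hn : 0 < n
    · have : {x : Pt | 0 < n ∧ shift (n:ℤ) x ∈ MK N} =
          (fun x : Pt => shift (n:ℤ) x) ⁻¹' MK N := by
        ext x; simp [hn]
      rw [this]
      exact (measurable_shiftMap _) (measurableSet_MK N)
    · have : {x : Pt | 0 < n ∧ shift (n:ℤ) x ∈ MK N} = ∅ := by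
        ext x; simp [hn]
      rw [this]
      exact MeasurableSet.empty
  exact measurableSet_sInf_eq (T := fun n => {x : Pt | 0 < n ∧ shift (n:ℤ) x ∈ MK N}) this g

lemma measurableSet_colN (N amax r k : ℕ) : MeasurableSet {x : Pt | colN N amax r x = k} := by
  classical
  have : {x : Pt | colN N amax r x = k} = ⋃ (p : ℕ), ⋃ (g : ℕ),
      ⋃ (_ : (if p < tOf amax r g then p % 3 else (p - tOf amax r g) % 3) = k),
      ({x : Pt | pDist N x = p} ∩
        (fun x : Pt => shift (-(p:ℤ)) x) ⁻¹' {z : Pt | gDist N z = g}) := by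
    ext x
    simp only [Set.mem_setOf_eq, Set.mem_iUnion, Set.mem_inter_iff, Set.mem_preimage]
    constructor
    · intro h
      exact ⟨pDist N x, gDist N (shift (-(pDist N x : ℤ)) x), by rw [← h, colN], rfl, rfl⟩
    · rintro ⟨p, g, hval, h1, h2⟩
      rw [colN, h1, h2]
      exact hval
  rw [this]
  exact MeasurableSet.iUnion fun p => MeasurableSet.iUnion fun g =>
    MeasurableSet.iUnion fun _ => (measurableSet_pDist N p).inter
      ((measurable_shiftMap _) (measurableSet_gDist N g))

/-! ### Topological facts about the shift -/

open Topology

lemma continuous_shiftMap (s : ℤ) : Continuous fun x : Pt => shift s x :=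
  continuous_pi fun n => continuous_apply (n + s)

def shiftHomeo (s : ℤ) : Pt ≃ₜ Pt where
  toFun := fun x => shift s x
  invFun := fun x => shift (-s) x
  left_inv := fun x => by
    show shift (-s) (shift s x) = x
    rw [shift_shift, add_neg_cancel, shift_zero]
  right_inv := fun x => by
    show shift s (shift (-s) x) = x
    rw [shift_shift, neg_add_cancel, shift_zero]
  continuous_toFun := continuous_shiftMap s
  continuous_invFun := continuous_shiftMap (-s)

lemma shift_image (s : ℤ) (S : Set Pt) :
    (fun x : Pt => shift s x) '' S = (fun x : Pt => shift (-s) x) ⁻¹' S := by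
  ext y
  constructor
  · rintro ⟨x, hx, rfl⟩
    simpa [Set.mem_preimage, shift_shift, shift_zero] using hx
  · intro hy
    exact ⟨shift (-s) y, hy, by
      show shift s (shift (-s) y) = y
      rw [shift_shift, neg_add_cancel, shift_zero]⟩

lemma isMeagre_shift_preimage {s : ℤ} {S : Set Pt} (h : IsMeagre S) :
    IsMeagre ((fun x : Pt => shift s x) ⁻¹' S) :=
  h.preimage_of_isOpenMap (continuous_shiftMap s) (shiftHomeo s).isOpenMap

lemma isMeagre_union {s t : Set Pt} (hs : IsMeagre s) (ht : IsMeagre t) : IsMeagre (s ∪ t) := by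
  rw [IsMeagre, Set.compl_union]
  exact Filter.inter_mem hs ht

lemma measurableSet_ne_shift (s : ℤ) : MeasurableSet {x : Pt | shift s x ≠ x} := by
  have h : {x : Pt | shift s x ≠ x} = (⋂ (n : ℤ), {x : Pt | x (n + s) = x n})ᶜ := by
    ext x
    simp only [Set.mem_setOf_eq, Set.mem_compl_iff, Set.mem_iInter, Ne, funext_iff, shift_apply]
  rw [h]
  refine (MeasurableSet.iInter fun n => ?_).compl
  have : {x : Pt | x (n + s) = x n} =
      ({x : Pt | x (n+s) = true} ∩ {x : Pt | x n = true}) ∪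
      ({x : Pt | x (n+s) = false} ∩ {x : Pt | x n = false}) := by
    ext x
    simp only [Set.mem_setOf_eq, Set.mem_union, Set.mem_inter_iff]
    cases h1 : x (n+s) <;> cases h2 : x n <;> simp
  rw [this]
  exact ((measurableSet_coord _ _).inter (measurableSet_coord _ _)).union
    ((measurableSet_coord _ _).inter (measurableSet_coord _ _))

lemma measurableSet_freePart : MeasurableSet FreePart := by
  have h : FreePart = ⋂ (s : ℤ), ⋂ (_ : s ≠ 0), {x : Pt | shift s x ≠ x} := by
    ext x
    simp [FreePart, Set.mem_iInter]
  rw [h]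
  exact MeasurableSet.iInter fun s => MeasurableSet.iInter fun _ => measurableSet_ne_shift s

lemma isOpen_ne_shift (s : ℤ) : IsOpen {x : Pt | shift s x ≠ x} := by
  have h : {x : Pt | shift s x ≠ x} = (⋂ (n : ℤ), {x : Pt | x (n + s) = x n})ᶜ := by
    ext x
    simp only [Set.mem_setOf_eq, Set.mem_compl_iff, Set.mem_iInter, Ne, funext_iff, shift_apply]
  rw [h]
  refine (isClosed_iInter fun n => ?_).isOpen_compl
  exact isClosed_eq (continuous_apply (n + s)) (continuous_apply n)

lemma dense_ne_shift (s : ℤ) (hs : s ≠ 0) : Dense {x : Pt | shift s x ≠ x} := by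
  rw [dense_iff_inter_open]
  rintro U hU ⟨z, hz⟩
  obtain ⟨I, u, hu, hsub⟩ := (isOpen_pi_iff.1 hU) z hz
  set m : ℤ := ((I.sup (fun i => i.natAbs) + s.natAbs + 1 : ℕ) : ℤ) with hm
  have hIbound : ∀ i ∈ I, i.natAbs ≤ I.sup (fun i => i.natAbs) :=
    fun i hi => Finset.le_sup (f := fun i : ℤ => i.natAbs) hi
  set y : Pt := fun j => if j = m then true else if j = m + s then false else z j with hy
  refine ⟨y, hsub ?_, ?_⟩
  · intro i hi
    have hb := hIbound i hi
    have h1 : i ≠ m := by omega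
    have h2 : i ≠ m + s := by omega
    have : y i = z i := by rw [hy]; simp [h1, h2]
    rw [this]
    exact (hu i hi).2
  · simp only [Set.mem_setOf_eq]
    intro hcon
    have h1 := congrFun hcon m
    have hms : m + s ≠ m := by omega
    rw [shift_apply] at h1
    have h2 : y (m + s) = false := by rw [hy]; simp [hms]
    have h3 : y m = true := by rw [hy]; simp
    rw [h2, h3] at h1
    exact Bool.false_ne_true h1

lemma freePart_residual : FreePart ∈ residual Pt := by
  have h : FreePart = ⋂ (s : ℤ), ⋂ (_ : s ≠ 0), {x : Pt | shift s x ≠ x} := by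
    ext x
    simp [FreePart, Set.mem_iInter]
  rw [h]
  refine (countable_iInter_mem).2 fun s => (countable_iInter_mem).2 fun hs => ?_
  exact residual_of_dense_open (isOpen_ne_shift s) (dense_ne_shift s hs)

/-! ### No Borel 2-coloring -/

theorem no_two_coloring (A : Finset ℕ) {a : ℕ} (haA : a ∈ A) (ha : 0 < a)
    (c : {x : ℤ → Bool // x ∈ FreePart} → Fin 2) : ¬ IsBorelColoring A c := by
  rintro ⟨hmeas, hproper⟩
  classical
  set B : Set Pt := Subtype.val '' (c ⁻¹' {(0 : Fin 2)}) with hB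
  have hBsub : B ⊆ FreePart := by
    rintro x ⟨⟨x', hx'⟩, _, rfl⟩
    exact hx'
  have mem_B_iff : ∀ (x : Pt) (hx : x ∈ FreePart), (x ∈ B ↔ c ⟨x, hx⟩ = 0) := by
    intro x hx
    constructor
    · rintro ⟨⟨x', hx'⟩, hc, heq⟩
      simp only [Set.mem_preimage, Set.mem_singleton_iff] at hc
      have hxx : x' = x := heq
      subst hxx
      exact hc
    · intro h
      exact ⟨⟨x, hx⟩, by simpa using h, rfl⟩
  have flip : ∀ (x : Pt) (hx : x ∈ FreePart), (shift (a:ℤ) x ∈ B ↔ x ∉ B) := by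
    intro x hx
    have h1 := hproper ⟨x, hx⟩ a haA (FreePart.shift_mem hx a)
    rw [mem_B_iff _ (FreePart.shift_mem hx a), mem_B_iff _ hx]
    have key : ∀ v w : Fin 2, v ≠ w → (w = 0 ↔ ¬ v = 0) := by decide
    exact key _ _ h1
  have oddIter : ∀ (k : ℕ) (x : Pt), x ∈ FreePart →
      (shift (((2*k+1) * a : ℕ) : ℤ) x ∈ B ↔ x ∉ B) := by
    intro k
    induction k with
    | zero =>
      intro x hx
      have h0 : (((2*0+1) * a : ℕ) : ℤ) = (a : ℤ) := by push_cast; ring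
      rw [h0]
      exact flip x hx
    | succ k ih =>
      intro x hx
      have hz : shift (((2*k+1)*a : ℕ) : ℤ) x ∈ FreePart := FreePart.shift_mem hx _
      have h1 := flip _ hz
      have h2 := flip _ (FreePart.shift_mem hz (a:ℤ))
      have hgoal : shift (((2*(k+1)+1)*a : ℕ) : ℤ) x
          = shift (a:ℤ) (shift (a:ℤ) (shift (((2*k+1)*a : ℕ) : ℤ) x)) := by
        rw [shift_shift, shift_shift]
        congr 1
        push_cast
        ring
      rw [hgoal, h2, h1, not_not]
      exact ih x hx
  have hBmeas : MeasurableSet B :=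
    measurableSet_freePart.subtype_image (hmeas (measurableSet_singleton 0))
  have hBbaire : BaireMeasurableSet B := hBmeas.baireMeasurableSet
  obtain ⟨U, hUopen, hUeq⟩ := hBbaire.residualEq_isOpen
  have hUB : ∀ {SS : Set Pt}, SS ⊆ U → IsMeagre (SS \ B) := by
    intro SS hSSU
    rw [IsMeagre]
    refine Filter.mem_of_superset hUeq ?_
    intro x hx
    simp only [Set.mem_setOf_eq] at hx
    intro hmem
    refine hmem.2 ?_
    have hxe : (x ∈ B) = (x ∈ U) := hx
    rw [hxe]
    exact hSSU hmem.1
  rcases Set.eq_empty_or_nonempty U with hUe | ⟨z, hz⟩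
  · have hBm : IsMeagre B := by
      rw [IsMeagre]
      refine Filter.mem_of_superset hUeq ?_
      intro x hx
      simp only [Set.mem_setOf_eq] at hx
      intro hmem
      have hxe : (x ∈ B) = (x ∈ U) := hx
      rw [hxe, hUe] at hmem
      exact hmem
    have hB1 : FreePart \ B ⊆ (fun x : Pt => shift (-(a:ℤ)) x) ⁻¹' B := by
      rintro x ⟨hxF, hxB⟩
      have hy : shift (-(a:ℤ)) x ∈ FreePart := FreePart.shift_mem hxF _
      have h1 := flip _ hy
      rw [shift_shift, neg_add_cancel, shift_zero] at h1
      by_contra h2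
      exact hxB (h1.mpr h2)
    have hFm : IsMeagre FreePart := by
      have hsub2 : FreePart ⊆ B ∪ (fun x : Pt => shift (-(a:ℤ)) x) ⁻¹' B := by
        intro x hx
        by_cases hxB : x ∈ B
        · exact Or.inl hxB
        · exact Or.inr (hB1 ⟨hx, hxB⟩)
      exact (isMeagre_union hBm (isMeagre_shift_preimage hBm)).mono hsub2
    have h1 : (∅ : Set Pt) ∈ residual Pt := by
      have h2 := Filter.inter_mem freePart_residual hFm
      rwa [Set.inter_compl_self] at h2
    obtain ⟨w, hw⟩ := (dense_of_mem_residual h1).nonempty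
    exact hw
  · obtain ⟨I, u, hu, hsub⟩ := (isOpen_pi_iff.1 hUopen) z hz
    set V : Set Pt := {y : Pt | ∀ i ∈ I, y i = z i} with hV
    have hVU : V ⊆ U := by
      intro y hy
      refine hsub fun i hi => ?_
      rw [hy i hi]
      exact (hu i hi).2
    have hVopen : IsOpen V := by
      have hVi : V = ⋂ i ∈ I, (fun y : Pt => y i) ⁻¹' {z i} := by
        ext y
        simp [hV, Set.mem_iInter]
      rw [hVi]
      exact isOpen_biInter_finset fun i _ =>
        (isOpen_discrete {z i}).preimage (continuous_apply i)
    set S : ℕ := I.sup (fun i => i.natAbs) with hS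
    have hIband : ∀ i ∈ I, i.natAbs ≤ S := fun i hi =>
      Finset.le_sup (f := fun i : ℤ => i.natAbs) hi
    set s : ℕ := (2*S+1) * a with hs
    have hsge : 2*S+1 ≤ s := by
      have h2 : (2*S+1) * 1 ≤ (2*S+1) * a := Nat.mul_le_mul_left _ ha
      omega
    set Wn : Set Pt := {y : Pt | ∀ i ∈ I, y (i - (s:ℤ)) = z i} with hW
    have hWimage : (fun x : Pt => shift (s:ℤ) x) '' V = Wn := by
      rw [shift_image]
      ext y
      simp only [Set.mem_preimage, hV, hW, Set.mem_setOf_eq, shift_apply, sub_eq_add_neg]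
    have hWopen : IsOpen Wn := by
      have hWi : Wn = ⋂ i ∈ I, (fun y : Pt => y (i - (s:ℤ))) ⁻¹' {z i} := by
        ext y
        simp [hW, Set.mem_iInter]
      rw [hWi]
      exact isOpen_biInter_finset fun i _ =>
        (isOpen_discrete {z i}).preimage (continuous_apply (i - (s:ℤ)))
    have hWmB : IsMeagre (Wn \ (fun x : Pt => shift (s:ℤ) x) '' B) := by
      have h1 : IsMeagre ((fun x : Pt => shift (s:ℤ) x) '' (V \ B)) := by
        rw [shift_image]
        exact isMeagre_shift_preimage (hUB hVU)
      refine h1.mono ?_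
      rintro y ⟨hyW, hyB⟩
      rw [← hWimage] at hyW
      obtain ⟨x, hxV, rfl⟩ := hyW
      exact ⟨x, ⟨hxV, fun hxB => hyB ⟨x, hxB, rfl⟩⟩, rfl⟩
    set y0 : Pt := fun j => if j ∈ I then z j else if (j + s) ∈ I then z (j + s) else false with hy0
    have hy0V : y0 ∈ V := by
      intro i hi
      rw [hy0]
      simp [hi]
    have hy0W : y0 ∈ Wn := by
      intro i hi
      have h1 : i - (s:ℤ) ∉ I := by
        intro hcon
        have hc1 := hIband _ hcon
        have hc2 := hIband _ hi
        omega
      have h2 : (i - (s:ℤ)) + s ∈ I := by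
        rw [sub_add_cancel]
        exact hi
      rw [hy0]
      simp only [if_neg h1, if_pos h2]
      congr 1
      rw [sub_add_cancel]
    have hdisj : ∀ x ∈ B, shift (s:ℤ) x ∉ B := by
      intro x hxB
      have hxF := hBsub hxB
      have h1 := oddIter S x hxF
      rw [← hs] at h1
      exact fun hc => (h1.1 hc) hxB
    have hcover : V ∩ Wn ⊆ (V \ B) ∪ (Wn \ (fun x : Pt => shift (s:ℤ) x) '' B) := by
      rintro x ⟨hxV, hxW⟩
      by_cases hxB : x ∈ B
      · refine Or.inr ⟨hxW, ?_⟩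
        rintro ⟨w, hwB, heq⟩
        refine hdisj w hwB ?_
        rw [show shift ((s:ℕ):ℤ) w = x from heq]
        exact hxB
      · exact Or.inl ⟨hxV, hxB⟩
    have hmeag : IsMeagre (V ∩ Wn) := ((isMeagre_union (hUB hVU) hWmB).mono hcover)
    obtain ⟨w, hw1, hw2⟩ := (dense_of_mem_residual hmeag).inter_open_nonempty
      (V ∩ Wn) (hVopen.inter hWopen) ⟨y0, hy0V, hy0W⟩
    exact hw2 hw1

/-! ### Existence of a Borel 3-coloring and the main theorem -/

theorem exists_three_coloring (A : Finset ℕ) (hA : A.Nonempty) (hpos : ∀ a ∈ A, 0 < a)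
    {r : ℕ} (hr1 : 1 ≤ r) (hr2 : r ≤ 2) (hmod : ∀ a ∈ A, a % 3 = r) :
    ∃ c : {x : ℤ → Bool // x ∈ FreePart} → Fin 3, IsBorelColoring A c := by
  set amax := A.max' hA with hamax
  set N := 2*amax + 6 with hNdef
  refine ⟨fun x => ⟨colN N amax r x.1, colN_lt N amax r x.1⟩, ?_, ?_⟩
  · have hg : Measurable fun v : Pt => (⟨colN N amax r v, colN_lt N amax r v⟩ : Fin 3) := by
      apply measurable_to_countable'
      intro i
      have hpre : (fun v : Pt => (⟨colN N amax r v, colN_lt N amax r v⟩ : Fin 3)) ⁻¹' {i}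
          = {v : Pt | colN N amax r v = i.val} := by
        ext v
        simp [Fin.ext_iff]
      rw [hpre]
      exact measurableSet_colN N amax r i.val
    exact hg.comp measurable_subtype_coe
  · intro x a haA h hceq
    have hne : colN N amax r x.1 ≠ colN N amax r (shift (a:ℤ) x.1) :=
      colN_ne hr1 hr2 hNdef x.2 (hpos a haA) (A.le_max' a haA) (hmod a haA)
    exact hne (by simpa [Fin.ext_iff] using hceq)

theorem borelChromatic_eq_three_of_constant_mod_three'
    (A : Finset ℕ) (hA : A.Nonempty) (hpos : ∀ a ∈ A, 0 < a)
    (hmod : (∀ a ∈ A, a % 3 = 1) ∨ (∀ a ∈ A, a % 3 = 2)) :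
    borelChromatic A = 3 := by
  have hmod' : ∃ r, 1 ≤ r ∧ r ≤ 2 ∧ ∀ a ∈ A, a % 3 = r := by
    rcases hmod with h | h
    · exact ⟨1, by norm_num, by norm_num, h⟩
    · exact ⟨2, by norm_num, le_rfl, h⟩
  obtain ⟨r, hr1, hr2, hmodr⟩ := hmod'
  obtain ⟨c3, hc3⟩ := exists_three_coloring A hA hpos hr1 hr2 hmodr
  have h3 : 3 ∈ {k : ℕ | ∃ c : {x : ℤ → Bool // x ∈ FreePart} → Fin k, IsBorelColoring A c} :=
    ⟨c3, hc3⟩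
  obtain ⟨a, haA⟩ := hA
  have hlow : ∀ k ∈ {k : ℕ | ∃ c : {x : ℤ → Bool // x ∈ FreePart} → Fin k,
      IsBorelColoring A c}, 3 ≤ k := by
    rintro k ⟨c, hc⟩
    by_contra hcon
    push_neg at hcon
    have hk2 : k ≤ 2 := by omega
    apply no_two_coloring A haA (hpos a haA) (fun v => Fin.castLE hk2 (c v))
    constructor
    · exact Measurable.comp (Measurable.of_discrete (f := Fin.castLE hk2)) hc.1
    · intro x b hbA h heq
      apply hc.2 x b hbA h
      have hval := congrArg Fin.val heq
      simp only [Fin.coe_castLE] at hval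
      exact Fin.ext hval
  rw [borelChromatic]
  exact le_antisymm (Nat.sInf_le h3) (le_csInf ⟨3, h3⟩ hlow)

/-- If all `aᵢ ≡ 1 (mod 3)`, or all `aᵢ ≡ 2 (mod 3)`, then
`χ(a₁,…,aₙ) = 3`. -/
theorem borelChromatic_eq_three_of_constant_mod_three
    (A : Finset ℕ) (hA : A.Nonempty) (hpos : ∀ a ∈ A, 0 < a) (hgcd : A.gcd id = 1)
    (hmod : (∀ a ∈ A, a % 3 = 1) ∨ (∀ a ∈ A, a % 3 = 2)) :
    borelChromatic A = 3 :=
  borelChromatic_eq_three_of_constant_mod_three' A hA hpos hmod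
end
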